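/- arXiv:2212.12138 — 8 statements merged into one kernel-verified Lean document; each statement's English description precedes it below -/
import Mathlib

section
/- Let Δ be a shape datum containing two pairs (T,d) and (T',d) with the same second coordinate d, and let Δ' be the shape datum obtained from Δ by replacing these two pairs with the single pair (T+T', d) (all other pairs unchanged, so Δ and Δ' have the same rank). Then R(Δ') > R(Δ). Consequently, among all shape data inducing a fixed partition of N (where a pair (T,d) contributes T parts equal to d), the invariant R is maximized by the datum in which each distinct part value occurs in exactly one pair. -/
/-- The rank of a shape datum `Δ = ((T₁,d₁),…,(T_k,d_k))`: `N = Σ Tᵢ·dᵢ`. -/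
def rankShape (Δ : List (ℕ × ℕ)) : ℕ := (Δ.map (fun p => p.1 * p.2)).sum

/-- The invariant `R̄(Δ) = (1/2)(N² + Σ Tᵢ²·dᵢ)`. -/
def Rbar (Δ : List (ℕ × ℕ)) : ℚ :=
  ((rankShape Δ : ℚ) ^ 2 + (Δ.map (fun p => (p.1 : ℚ) ^ 2 * p.2)).sum) / 2

/-- The correction term subtracted from `R̄` for a single block `(T,d)`. -/
def corr (p : ℕ × ℕ) : ℚ :=
  if p.1 = 1 then ((p.2 : ℚ) ^ 2 + p.2) / 2 - 1
  else if p.1 = 2 then 3 * p.2 - 3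
  else if p.1 = 3 ∧ 1 < p.2 then 9 * p.2 - ((4 + 1 / 10 ^ 100) * p.2 + 5)
  else 0

/-- The invariant `R(Δ)`. -/
def Rshape (Δ : List (ℕ × ℕ)) : ℚ := Rbar Δ - (Δ.map corr).sum

/-- The partition of `N` induced by a shape datum: a pair `(T,d)` contributes
`T` parts equal to `d`. -/
def toPartition (Δ : List (ℕ × ℕ)) : Multiset ℕ :=
  (Δ.map (fun p => Multiset.replicate p.1 p.2)).sum

/-- `R` of a partition: use the shape datum in which each distinct part value
occurs in exactly one pair, with multiplicity as first coordinate. -/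
noncomputable def RQ (Q : Multiset ℕ) : ℚ :=
  Rshape (Q.toFinset.toList.map (fun a => (Q.count a, a)))


lemma corr_nonneg (T d : ℕ) (hT : 0 < T) (hd : 0 < d) : 0 ≤ corr (T, d) := by
  have hd1 : (1:ℚ) ≤ d := by exact_mod_cast hd
  unfold corr
  dsimp only
  split_ifs with h1 h2 h3
  · nlinarith
  · linarith
  · have h2d : (2:ℚ) ≤ d := by exact_mod_cast h3.2
    have : (1/10^100 : ℚ) ≤ 1 := by norm_num
    nlinarith
  · exact le_rfl

lemma key (T T' d : ℕ) (hT : 0 < T) (hT' : 0 < T') (hd : 0 < d) :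
    corr (T + T', d) < T * T' * d + corr (T, d) + corr (T', d) := by
  have hd1 : (1:ℚ) ≤ d := by exact_mod_cast hd
  have hTT : (1:ℚ) ≤ (T:ℚ) * T' := by exact_mod_cast Nat.one_le_iff_ne_zero.mpr (Nat.mul_ne_zero hT.ne' hT'.ne')
  have hε : (0:ℚ) < 1/10^100 := by norm_num
  have hε1 : (1/10^100:ℚ) ≤ 1 := by norm_num
  rcases Nat.lt_or_ge (T + T') 4 with h | h
  · have hT2 : T ≤ 2 := by omega
    have hT'2 : T' ≤ 2 := by omega
    interval_cases T <;> interval_cases T' <;>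
      · simp only [corr]
        norm_num
        (try split_ifs) <;> push_cast <;> nlinarith [sq_nonneg ((d:ℚ) - 1)]
  · have hc : corr (T + T', d) = 0 := by
      unfold corr; dsimp only
      have h1 : T + T' ≠ 1 := by omega
      have h2 : T + T' ≠ 2 := by omega
      have h3 : T + T' ≠ 3 := by omega
      simp [h1, h2, h3]
    rw [hc]
    have c1 := corr_nonneg T d hT hd
    have c2 := corr_nonneg T' d hT' hd
    nlinarith

lemma merge_lt (A B C : List (ℕ × ℕ)) (T T' d : ℕ) (hT : 0 < T) (hT' : 0 < T') (hd : 0 < d) :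
    Rshape (A ++ (T, d) :: (B ++ (T', d) :: C)) <
      Rshape (A ++ (T + T', d) :: (B ++ C)) := by
  have hrank : rankShape (A ++ (T, d) :: (B ++ (T', d) :: C))
      = rankShape (A ++ (T + T', d) :: (B ++ C)) := by
    simp only [rankShape, List.map_append, List.map_cons, List.sum_append, List.sum_cons]
    ring
  have hkey := key T T' d hT hT' hd
  unfold Rshape Rbar
  rw [hrank]
  simp only [List.map_append, List.map_cons, List.sum_append, List.sum_cons]
  push_cast
  nlinarith [hkey]

lemma Rshape_perm {Δ Δ' : List (ℕ × ℕ)} (h : Δ.Perm Δ') : Rshape Δ = Rshape Δ' := by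
  unfold Rshape Rbar rankShape
  rw [(h.map _).sum_eq, (h.map _).sum_eq, (h.map _).sum_eq]

lemma count_toPartition (Δ : List (ℕ × ℕ)) (a : ℕ) :
    (toPartition Δ).count a = (Δ.map (fun p => if p.2 = a then p.1 else 0)).sum := by
  induction Δ with
  | nil => simp [toPartition]
  | cons p Δ ih =>
    simp only [toPartition, List.map_cons, List.sum_cons, Multiset.count_add,
      Multiset.count_replicate] at *
    try rw [ih]
    try (congr 1; split_ifs with h1 h2 h2 <;> simp_all)

lemma mem_toPartition (Δ : List (ℕ × ℕ)) (a : ℕ) :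
    a ∈ toPartition Δ ↔ ∃ p ∈ Δ, 0 < p.1 ∧ p.2 = a := by
  induction Δ with
  | nil => simp [toPartition]
  | cons p Δ ih =>
    simp only [toPartition, List.map_cons, List.sum_cons, Multiset.mem_add,
      Multiset.mem_replicate] at *
    rw [ih]
    constructor
    · rintro (⟨h1, rfl⟩ | ⟨q, hq, hq1, hq2⟩)
      · exact ⟨p, List.mem_cons_self, Nat.pos_of_ne_zero h1, rfl⟩
      · exact ⟨q, List.mem_cons_of_mem _ hq, hq1, hq2⟩
    · rintro ⟨q, hq, hq1, hq2⟩
      rcases List.mem_cons.mp hq with rfl | hq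
      · exact Or.inl ⟨hq1.ne', hq2.symm⟩
      · exact Or.inr ⟨q, hq, hq1, hq2⟩

lemma count_eq_of_nodup (Δ : List (ℕ × ℕ)) (hnd : (Δ.map Prod.snd).Nodup)
    (T d : ℕ) (hmem : (T, d) ∈ Δ) : (toPartition Δ).count d = T := by
  rw [count_toPartition]
  induction Δ with
  | nil => cases hmem
  | cons q Δ ih =>
    rw [List.map_cons, List.nodup_cons] at hnd
    rcases List.mem_cons.mp hmem with rfl | hmem'
    · simp only [List.map_cons, List.sum_cons, if_pos rfl]
      have : (Δ.map (fun p => if p.2 = d then p.1 else 0)).sum = 0 := by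
        apply List.sum_eq_zero
        intro x hx
        obtain ⟨r, hr, rfl⟩ := List.mem_map.mp hx
        have : r.2 ≠ d := fun h => hnd.1 (List.mem_map.mpr ⟨r, hr, h⟩)
        simp [this]
      simp [this]
    · have hq : q.2 ≠ d := by
        intro h
        exact hnd.1 (List.mem_map.mpr ⟨(T, d), hmem', h.symm ▸ rfl⟩)
      simp only [List.map_cons, List.sum_cons, if_neg hq, zero_add]
      exact ih hnd.2 hmem'

lemma canonical_perm (Δ : List (ℕ × ℕ)) (hpos : ∀ p ∈ Δ, 0 < p.1 ∧ 0 < p.2)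
    (hnd : (Δ.map Prod.snd).Nodup) :
    Δ.Perm ((toPartition Δ).toFinset.toList.map (fun a => ((toPartition Δ).count a, a))) := by
  rw [List.perm_ext_iff_of_nodup]
  · intro p
    simp only [List.mem_map, Finset.mem_toList, Multiset.mem_toFinset]
    constructor
    · intro hp
      refine ⟨p.2, ?_, ?_⟩
      · exact (mem_toPartition Δ p.2).mpr ⟨p, hp, (hpos p hp).1, rfl⟩
      · have := count_eq_of_nodup Δ hnd p.1 p.2 (by simpa using hp)
        rw [this]
    · rintro ⟨a, ha, rfl⟩
      obtain ⟨q, hq, hq1, rfl⟩ := (mem_toPartition Δ a).mp (by exact ha)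
      have := count_eq_of_nodup Δ hnd q.1 q.2 (by simpa using hq)
      rw [this]
      exact hq
  · exact hnd.of_map
  · refine List.Nodup.map ?_ (Finset.nodup_toList _)
    intro a b h
    exact congrArg Prod.snd h

lemma exists_dup (Δ : List (ℕ × ℕ)) (h : ¬ (Δ.map Prod.snd).Nodup) :
    ∃ A T B T' C d, Δ = A ++ (T, d) :: (B ++ (T', d) :: C) := by
  induction Δ with
  | nil => simp at h
  | cons p Δ ih =>
    rw [List.map_cons, List.nodup_cons] at h
    by_cases hm : p.2 ∈ Δ.map Prod.snd
    · obtain ⟨q, hq, hq2⟩ := List.mem_map.mp hm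
      obtain ⟨B, C, rfl⟩ := List.append_of_mem hq
      exact ⟨[], p.1, B, q.1, C, p.2, by simp [← hq2]; exact Prod.ext_iff.mpr ⟨rfl, hq2.symm⟩⟩
    · have h' : ¬ (Δ.map Prod.snd).Nodup := by tauto
      obtain ⟨A, T, B, T', C, d, rfl⟩ := ih h'
      exact ⟨p :: A, T, B, T', C, d, rfl⟩

lemma toPartition_merge (A B C : List (ℕ × ℕ)) (T T' d : ℕ) :
    toPartition (A ++ (T + T', d) :: (B ++ C)) =
      toPartition (A ++ (T, d) :: (B ++ (T', d) :: C)) := by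
  simp only [toPartition, List.map_append, List.map_cons, List.sum_append, List.sum_cons,
    Multiset.replicate_add]
  abel

lemma main2 : ∀ (n : ℕ) (Δ : List (ℕ × ℕ)), Δ.length = n →
    (∀ p ∈ Δ, 0 < p.1 ∧ 0 < p.2) → Rshape Δ ≤ RQ (toPartition Δ) := by
  intro n
  induction n using Nat.strong_induction_on with
  | _ n ih =>
    intro Δ hlen hpos
    by_cases hnd : (Δ.map Prod.snd).Nodup
    · exact le_of_eq (Rshape_perm (canonical_perm Δ hpos hnd))
    · obtain ⟨A, T, B, T', C, d, rfl⟩ := exists_dup Δ hnd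
      have hTd := hpos (T, d) (by simp)
      have hT'd := hpos (T', d) (by simp)
      have hposm : ∀ p ∈ A ++ (T + T', d) :: (B ++ C), 0 < p.1 ∧ 0 < p.2 := by
        intro p hp
        simp only [List.mem_append, List.mem_cons] at hp
        rcases hp with hp | hp | hp
        · exact hpos p (by simp [hp])
        · subst hp; exact ⟨by omega, hTd.2⟩
        · rcases hp with hp | hp
          · exact hpos p (by simp [hp])
          · exact hpos p (by simp [hp])
      have hlt := merge_lt A B C T T' d hTd.1 hT'd.1 hTd.2
      have hlen' : (A ++ (T + T', d) :: (B ++ C)).length < n := by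
        subst hlen; simp; try omega
      have := ih _ hlen' _ rfl hposm
      rw [toPartition_merge] at this
      linarith

/-- Merging two blocks `(T,d)`, `(T',d)` with the same second coordinate into the
single block `(T+T',d)` strictly increases `R`. Consequently, among all shape data
inducing a fixed partition of `N`, the invariant `R` is maximized by the datum in
which each distinct part value occurs in exactly one pair. -/
theorem merge_blocks_increases_R :
    (∀ (A B C : List (ℕ × ℕ)) (T T' d : ℕ), 0 < T → 0 < T' → 0 < d →
      (∀ p ∈ A ++ B ++ C, 0 < p.1 ∧ 0 < p.2) →
      Rshape (A ++ (T, d) :: (B ++ (T', d) :: C)) <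
        Rshape (A ++ (T + T', d) :: (B ++ C))) ∧
    (∀ Δ : List (ℕ × ℕ), (∀ p ∈ Δ, 0 < p.1 ∧ 0 < p.2) →
      Rshape Δ ≤ RQ (toPartition Δ)) := by
  constructor
  · intro A B C T T' d hT hT' hd _
    exact merge_lt A B C T T' d hT hT' hd
  · intro Δ hpos
    exact main2 Δ.length Δ rfl hpos
end

section
/- Let Q_0 be a partition whose parts are pairwise distinct integers each of size at least 2, let M be the sum of Q_0, and let N ≥ M be an integer. Let Q_can be the partition of N obtained by adjoining N − M parts equal to 1 to Q_0. Then for every partition Q of N that contains Q_0 as a subpartition (i.e. the multiset Q_0 is contained in the multiset Q), one has R(Q) ≤ R(Q_can). -/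
def fblk (r a : ℕ) : ℚ := (r : ℚ) ^ 2 * a / 2 - corr (r, a)

lemma fblk_zero (a : ℕ) : fblk 0 a = 0 := by simp [fblk, corr]
lemma fblk_one (a : ℕ) : fblk 1 a = 1 - (a : ℚ) ^ 2 / 2 := by simp [fblk, corr]; ring
lemma fblk_two (a : ℕ) : fblk 2 a = 3 - (a : ℚ) := by norm_num [fblk, corr]; ring
lemma fblk_three (a : ℕ) (ha : 1 < a) : fblk 3 a = (1 / 10 ^ 100 - 1 / 2) * a + 5 := by
  norm_num [fblk, corr, ha]; ring
lemma fblk_ge4 (r a : ℕ) (hr : 4 ≤ r) : fblk r a = (r : ℚ) ^ 2 * a / 2 := by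
  have : corr (r, a) = 0 := by
    have h1 : r ≠ 1 := by omega
    have h2 : r ≠ 2 := by omega
    have h3 : r ≠ 3 := by omega
    simp [corr, h1, h2, h3]
  rw [fblk, this, sub_zero]
lemma fblk_one_right (s : ℕ) : fblk s 1 = (s : ℚ) ^ 2 / 2 := by
  unfold fblk corr
  rcases s with _|_|_|s <;> norm_num

lemma key_s1 (a r r₀ : ℕ) (ha : 2 ≤ a) (hr₀ : r₀ ≤ 1) (hle : r₀ ≤ r) :
    fblk r a - fblk r₀ a ≤ (((r : ℚ) - r₀) * a) ^ 2 / 2 := by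
  have hx : (2 : ℚ) ≤ (a : ℚ) := by exact_mod_cast ha
  have ha1 : 1 < a := ha
  have he2 : (1 : ℚ) / 10 ^ 100 ≤ 1 / 2 := by norm_num
  have hea : (1 : ℚ) / 10 ^ 100 * a ≤ 1 / 2 * a :=
    mul_le_mul_of_nonneg_right he2 (by positivity)
  rcases Nat.lt_or_ge r 4 with h4 | h4
  · interval_cases r₀ <;> interval_cases r <;>
      simp only [fblk_zero, fblk_one, fblk_two, fblk_three a ha1] <;>
      push_cast <;> nlinarith [sq_nonneg ((a : ℚ) - 2), sq_nonneg (a : ℚ)]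
  · have hr : (4 : ℚ) ≤ (r : ℚ) := by exact_mod_cast h4
    rw [fblk_ge4 r a h4]
    interval_cases r₀
    · rw [fblk_zero]
      nlinarith [mul_nonneg (by positivity : (0:ℚ) ≤ (r:ℚ)^2) (by nlinarith : (0:ℚ) ≤ (a:ℚ)^2 - a)]
    · rw [fblk_one]
      nlinarith [mul_le_mul_of_nonneg_left (show 2 * (a:ℚ) ≤ (a:ℚ)^2 by nlinarith)
          (show (0:ℚ) ≤ (r:ℚ)^2 - 2*r by nlinarith),
        mul_nonneg (show (0:ℚ) ≤ (r:ℚ)^2 - 4*r by nlinarith) (show (0:ℚ) ≤ (a:ℚ) by positivity)]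

lemma sum_count_mul (Q : Multiset ℕ) : ∑ a ∈ Q.toFinset, Q.count a * a = Q.sum := by
  conv_rhs => rw [← Multiset.toFinset_sum_count_nsmul_eq Q]
  rw [Multiset.sum_sum]
  exact Finset.sum_congr rfl fun a _ => by
    rw [Multiset.sum_nsmul, Multiset.sum_singleton, smul_eq_mul]

lemma sum_count_mul' (Q : Multiset ℕ) (F : Finset ℕ) (hF : Q.toFinset ⊆ F) :
    ∑ a ∈ F, (Q.count a : ℚ) * a = (Q.sum : ℚ) := by
  have : ∑ a ∈ F, Q.count a * a = Q.sum := by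
    rw [← sum_count_mul Q]
    refine (Finset.sum_subset hF fun a _ ha => ?_).symm
    rw [Multiset.count_eq_zero_of_notMem (fun h => ha (Multiset.mem_toFinset.2 h)), zero_mul]
  calc ∑ a ∈ F, (Q.count a : ℚ) * a = ((∑ a ∈ F, Q.count a * a : ℕ) : ℚ) := by push_cast; ring_nf
    _ = (Q.sum : ℚ) := by rw [this]

lemma RQ_eq (Q : Multiset ℕ) (F : Finset ℕ) (hF : Q.toFinset ⊆ F) :
    RQ Q = (Q.sum : ℚ) ^ 2 / 2 + ∑ a ∈ F, fblk (Q.count a) a := by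
  have hsum : ∑ a ∈ F, fblk (Q.count a) a = ∑ a ∈ Q.toFinset, fblk (Q.count a) a := by
    refine (Finset.sum_subset hF fun a _ ha => ?_).symm
    rw [Multiset.count_eq_zero_of_notMem (fun h => ha (Multiset.mem_toFinset.2 h)), fblk_zero]
  rw [hsum]
  unfold RQ Rshape Rbar rankShape fblk
  simp only [List.map_map, Function.comp_def]
  rw [Finset.sum_map_toList, Finset.sum_map_toList, Finset.sum_map_toList, sum_count_mul,
    Finset.sum_sub_distrib, ← Finset.sum_div]
  ring


/-- Let `Q₀` be a partition with pairwise distinct parts, each of size at least 2,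
`M` its sum, and `N ≥ M`.  Let `Q_can` be obtained from `Q₀` by adjoining `N − M`
parts equal to `1`.  Then every partition `Q` of `N` containing `Q₀` as a
subpartition satisfies `R(Q) ≤ R(Q_can)`. -/
theorem RQ_le_RQ_can (Q₀ : Multiset ℕ) (hnd : Q₀.Nodup) (h2 : ∀ a ∈ Q₀, 2 ≤ a)
    (N : ℕ) (hN : Q₀.sum ≤ N)
    (Q : Multiset ℕ) (hpos : ∀ a ∈ Q, 0 < a) (hsum : Q.sum = N) (hsub : Q₀ ≤ Q) :
    RQ Q ≤ RQ (Q₀ + Multiset.replicate (N - Q₀.sum) 1) := by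
  classical
  set t := N - Q₀.sum with ht
  set Qc := Q₀ + Multiset.replicate t 1 with hQc
  have h1Q₀ : Q₀.count 1 = 0 := Multiset.count_eq_zero.2 (fun h => by have := h2 1 h; omega)
  have hQcsum : Qc.sum = N := by
    rw [hQc, Multiset.sum_add, Multiset.sum_replicate, smul_eq_mul, mul_one]; omega
  set F : Finset ℕ := insert 1 (Q.toFinset ∪ Q₀.toFinset) with hF
  have hQF : Q.toFinset ⊆ F := fun a haa =>
    Finset.mem_insert_of_mem (Finset.mem_union_left _ haa)
  have hQ₀F : Q₀.toFinset ⊆ F := fun a haa =>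
    Finset.mem_insert_of_mem (Finset.mem_union_right _ haa)
  have hQcF : Qc.toFinset ⊆ F := by
    intro a haa
    rw [Multiset.mem_toFinset, hQc, Multiset.mem_add] at haa
    rcases haa with h | h
    · exact hQ₀F (Multiset.mem_toFinset.2 h)
    · rw [Multiset.eq_of_mem_replicate h]; exact Finset.mem_insert_self _ _
  rw [RQ_eq Q F hQF, RQ_eq Qc F hQcF, hQcsum, hsum]
  have h1F : (1 : ℕ) ∈ F := Finset.mem_insert_self _ _
  have hsplit : ∀ g : ℕ → ℚ, ∑ a ∈ F, g a = g 1 + ∑ a ∈ F.erase 1, g a :=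
    fun g => (Finset.add_sum_erase F g h1F).symm
  rw [hsplit, hsplit]
  set F' := F.erase 1 with hF'
  have hcQc : ∀ a ∈ F', Qc.count a = Q₀.count a := by
    intro a haa
    have hne : a ≠ 1 := Finset.ne_of_mem_erase haa
    rw [hQc, Multiset.count_add, Multiset.count_replicate, if_neg (fun h => hne h.symm), add_zero]
  have hcQc1 : Qc.count 1 = t := by
    rw [hQc, Multiset.count_add, Multiset.count_replicate, if_pos rfl, h1Q₀, zero_add]
  have ha2 : ∀ a ∈ F', 2 ≤ a := by
    intro a haa
    have hne : a ≠ 1 := Finset.ne_of_mem_erase haa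
    have : a ∈ F := Finset.mem_of_mem_erase haa
    rw [hF, Finset.mem_insert, Finset.mem_union] at this
    rcases this with h | h | h
    · omega
    · have := hpos a (Multiset.mem_toFinset.1 h); omega
    · exact h2 a (Multiset.mem_toFinset.1 h)
  -- the per-element bound
  set e : ℕ → ℚ := fun a => ((Q.count a : ℚ) - Q₀.count a) * a with he
  have hcle : ∀ a, Q₀.count a ≤ Q.count a := fun a => Multiset.count_le_of_le a hsub
  have hc1 : ∀ a, Q₀.count a ≤ 1 := Multiset.nodup_iff_count_le_one.1 hnd
  have hkey : ∀ a ∈ F', fblk (Q.count a) a - fblk (Q₀.count a) a ≤ (e a) ^ 2 / 2 := by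
    intro a haa
    exact key_s1 a (Q.count a) (Q₀.count a) (ha2 a haa) (hc1 a) (hcle a)
  have he0 : ∀ a ∈ F', 0 ≤ e a := by
    intro a haa
    apply mul_nonneg _ (by positivity)
    have := hcle a
    simp only [sub_nonneg]
    exact_mod_cast this
  -- sum of e
  have hsumQ : ∑ a ∈ F, (Q.count a : ℚ) * a = (N : ℚ) := by
    rw [sum_count_mul' Q F hQF, hsum]
  have hsumQ₀ : ∑ a ∈ F, (Q₀.count a : ℚ) * a = (Q₀.sum : ℚ) := sum_count_mul' Q₀ F hQ₀F
  have hsume : ∑ a ∈ F', e a = (t : ℚ) - (Q.count 1 : ℚ) := by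
    have e1 : ∑ a ∈ F', (Q.count a : ℚ) * a = (N : ℚ) - (Q.count 1 : ℚ) := by
      have := hsplit (fun a => (Q.count a : ℚ) * a)
      rw [hsumQ] at this
      push_cast at this ⊢
      linarith
    have e2 : ∑ a ∈ F', (Q₀.count a : ℚ) * a = (Q₀.sum : ℚ) := by
      have := hsplit (fun a => (Q₀.count a : ℚ) * a)
      rw [hsumQ₀, h1Q₀] at this
      push_cast at this ⊢
      linarith
    have htq : (t : ℚ) = (N : ℚ) - (Q₀.sum : ℚ) := by
      rw [ht, Nat.cast_sub hN]
    simp only [he, sub_mul]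
    rw [Finset.sum_sub_distrib, e1, e2, htq]
    ring
  have hts : (0 : ℚ) ≤ (t : ℚ) - (Q.count 1 : ℚ) := hsume ▸ Finset.sum_nonneg he0
  -- aggregate
  have hchain : ∑ a ∈ F', fblk (Q.count a) a - ∑ a ∈ F', fblk (Q₀.count a) a ≤
      ((t : ℚ) - (Q.count 1 : ℚ)) ^ 2 / 2 := by
    rw [← Finset.sum_sub_distrib]
    calc ∑ a ∈ F', (fblk (Q.count a) a - fblk (Q₀.count a) a)
        ≤ ∑ a ∈ F', (e a) ^ 2 / 2 := Finset.sum_le_sum hkey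
      _ = (∑ a ∈ F', (e a) ^ 2) / 2 := by rw [Finset.sum_div]
      _ ≤ (∑ a ∈ F', e a) ^ 2 / 2 := by
          have := Finset.sum_sq_le_sq_sum_of_nonneg he0
          linarith
      _ = ((t : ℚ) - (Q.count 1 : ℚ)) ^ 2 / 2 := by rw [hsume]
  have hrw : ∀ a ∈ F', fblk (Qc.count a) a = fblk (Q₀.count a) a := fun a haa => by
    rw [hcQc a haa]
  rw [Finset.sum_congr rfl hrw, hcQc1, fblk_one_right, fblk_one_right]
  have hs0 : (0 : ℚ) ≤ (Q.count 1 : ℚ) := by positivity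
  nlinarith [hchain, hts, hs0]
end

section
/- Let Q be a partition (a finite multiset of positive integers) containing parts a and b with a ≥ b ≥ 1, and let Q' be the partition obtained from Q by replacing one occurrence of a and one occurrence of b with parts a+1 and b−1 (omitting the part b−1 when b = 1). Then σ_i(Q') ≥ σ_i(Q) for every natural number i. -/
/-- `ξ(n) = {n−1, n−3, …, n−2⌊n/2⌋+1}`, a multiset with `⌊n/2⌋` elements. -/
def xi (n : ℕ) : Multiset ℕ := (Multiset.range (n / 2)).map (fun j => n - 1 - 2 * j)

/-- `Ξ(Q)`: the multiset union of `ξ(n)` over the parts `n` of `Q`. -/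
def Xi (Q : Multiset ℕ) : Multiset ℕ := Q.bind xi

/-- `σ_i(Q)`: the sum of the `i` largest elements of `Ξ(Q)`, counted with
multiplicity (the total sum if `i` exceeds the cardinality). -/
def sigmaP (Q : Multiset ℕ) (i : ℕ) : ℕ :=
  (((Xi Q).sort (· ≤ ·)).reverse.take i).sum

/-! ### Auxiliary lemmas -/

/-- `σ_i` for a bare multiset. -/
def sigA (M : Multiset ℕ) (i : ℕ) : ℕ := ((M.sort (· ≤ ·)).reverse.take i).sum

lemma sigmaP_eq (Q : Multiset ℕ) (i : ℕ) : sigmaP Q i = sigA (Xi Q) i := rfl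

lemma take_succ_sum_le (t : List ℕ) (y n : ℕ) (h : ∀ x ∈ t, x ≤ y) :
    (t.take (n+1)).sum ≤ y + (t.take n).sum := by
  rcases lt_or_ge n t.length with hn | hn
  · rw [List.sum_take_succ _ _ hn]
    have := h t[n] (List.getElem_mem hn)
    omega
  · rw [List.take_of_length_le hn, List.take_of_length_le (le_trans hn (by omega))]
    omega

lemma sublist_sum_le_take {s t : List ℕ} (hs : s.Sublist t) (ht : t.Pairwise (· ≥ ·)) :
    s.sum ≤ (t.take s.length).sum := by
  induction hs with
  | slnil => simp
  | @cons l₁ l₂ y h ih =>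
    have ht' : l₂.Pairwise (· ≥ ·) := ht.of_cons
    rcases Nat.eq_zero_or_pos l₁.length with h0 | h0
    · rw [List.length_eq_zero_iff] at h0; simp [h0]
    · obtain ⟨n, hn⟩ : ∃ n, l₁.length = n + 1 := ⟨l₁.length - 1, by omega⟩
      rw [hn, List.take_succ_cons, List.sum_cons]
      have h1 : l₁.sum ≤ (l₂.take (n+1)).sum := hn ▸ ih ht'
      have h2 : (l₂.take (n+1)).sum ≤ y + (l₂.take n).sum :=
        take_succ_sum_le _ _ _ (fun x hx => List.rel_of_pairwise_cons ht hx)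
      omega
  | @cons_cons l₁ l₂ x h ih =>
    simp only [List.length_cons, List.take_succ_cons, List.sum_cons]
    exact Nat.add_le_add_left (ih ht.of_cons) x

lemma desc_sorted (M : Multiset ℕ) : ((M.sort (· ≤ ·)).reverse).Pairwise (· ≥ ·) := by
  simpa [List.pairwise_reverse, ge_iff_le] using Multiset.pairwise_sort M (· ≤ ·)

/-- Any submultiset of `M` with at most `i` elements has sum at most `sigA M i`. -/
lemma sum_le_sigA {S M : Multiset ℕ} (h : S ≤ M) {i : ℕ} (hi : Multiset.card S ≤ i) :
    S.sum ≤ sigA M i := by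
  set t := (M.sort (· ≤ ·)).reverse with ht
  have h1 : (S.sort (· ≤ ·) : Multiset ℕ) ≤ (M.sort (· ≤ ·) : Multiset ℕ) := by
    rwa [Multiset.sort_eq, Multiset.sort_eq]
  rw [Multiset.coe_le] at h1
  obtain ⟨l, hl, hsub⟩ := h1
  have hsub' : l.reverse.Sublist t := hsub.reverse
  have hlen : l.reverse.length = Multiset.card S := by
    rw [List.length_reverse, hl.length_eq, Multiset.length_sort]
  have key := sublist_sum_le_take hsub' (desc_sorted M)
  have hsum : l.reverse.sum = S.sum := by
    rw [List.sum_reverse, hl.sum_eq]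
    conv_rhs => rw [← Multiset.sort_eq S (· ≤ ·), Multiset.sum_coe]
  have mono : ((t.take (Multiset.card S)).sum ≤ (t.take i).sum) := by
    have : t.take (Multiset.card S) = (t.take i).take (Multiset.card S) := by
      rw [List.take_take, min_eq_left hi]
    rw [this]
    exact (List.take_sublist _ _).sum_le_sum (fun x _ => Nat.zero_le x)
  calc S.sum = l.reverse.sum := hsum.symm
    _ ≤ (t.take l.reverse.length).sum := key
    _ = (t.take (Multiset.card S)).sum := by rw [hlen]
    _ ≤ (t.take i).sum := mono

/-- `sigA M i` is realized as the sum of a submultiset of `M` with at most `i` elements. -/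
lemma exists_witness (M : Multiset ℕ) (i : ℕ) :
    ∃ T : Multiset ℕ, T ≤ M ∧ Multiset.card T ≤ i ∧ T.sum = sigA M i := by
  set t := (M.sort (· ≤ ·)).reverse with ht
  refine ⟨(t.take i : List ℕ), ?_, ?_, ?_⟩
  · have h1 : (t.take i).Sublist t := List.take_sublist _ _
    have : ((t.take i : List ℕ) : Multiset ℕ) ≤ (t : Multiset ℕ) :=
      Multiset.coe_le.mpr h1.subperm
    rwa [ht, Multiset.coe_reverse, Multiset.sort_eq] at this
  · simp
  · rfl

lemma xi_coe (n : ℕ) : xi n = ((List.range (n/2)).map (fun j => n - 1 - 2 * j) : List ℕ) := by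
  simp [xi, Multiset.range]

lemma xi_card (n : ℕ) : Multiset.card (xi n) = n / 2 := by simp [xi]

lemma range_map_sum (n : ℕ) : ∀ k, k ≤ n / 2 →
    ((List.range k).map (fun j => n - 1 - 2 * j)).sum = k * (n - k) := by
  intro k
  induction k with
  | zero => simp
  | succ k ih =>
    intro hk
    rw [List.range_succ, List.map_append, List.sum_append, ih (by omega)]
    simp only [List.map_cons, List.map_nil, List.sum_cons, List.sum_nil]
    have h2 : 2 * (k + 1) ≤ n := by omega
    zify [show k ≤ n by omega, show k + 1 ≤ n by omega, show 1 ≤ n by omega,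
      show 2 * k ≤ n - 1 by omega, h2]
    ring

lemma xi_sort (n : ℕ) : (xi n).sort (· ≤ ·)
    = ((List.range (n/2)).map (fun j => n - 1 - 2 * j)).reverse := by
  have hperm : ((xi n).sort (· ≤ ·)).Perm
      (((List.range (n/2)).map (fun j => n - 1 - 2 * j)).reverse) := by
    rw [← Multiset.coe_eq_coe, Multiset.sort_eq, Multiset.coe_reverse, ← xi_coe]
  have hs2 : (((List.range (n/2)).map (fun j => n - 1 - 2 * j)).reverse).Pairwise (· ≤ ·) := by
    rw [List.pairwise_reverse, List.pairwise_map]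
    exact List.pairwise_lt_range.imp (fun h => by omega)
  exact List.Perm.eq_of_pairwise' (Multiset.pairwise_sort _ _) hs2 hperm

lemma sigA_xi (n k : ℕ) (hk : k ≤ n / 2) : sigA (xi n) k = k * (n - k) := by
  rw [sigA, xi_sort, List.reverse_reverse, ← List.map_take, List.take_range,
    min_eq_left hk, range_map_sum n k hk]

/-- The top `k` elements of `ξ n` form a submultiset with sum `k(n-k)`. -/
lemma xi_witness (n k : ℕ) (hk : k ≤ n / 2) :
    ∃ T : Multiset ℕ, T ≤ xi n ∧ Multiset.card T = k ∧ T.sum = k * (n - k) := by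
  refine ⟨((List.range k).map (fun j => n - 1 - 2 * j) : List ℕ), ?_, by simp, ?_⟩
  · rw [xi_coe, Multiset.coe_le]
    exact (((List.range_sublist).mpr hk).map _).subperm
  · rw [Multiset.sum_coe, range_map_sum n k hk]

/-- The key arithmetic step. -/
lemma choose_shift {a b p q : ℕ} (hba : b ≤ a) (hb1 : 1 ≤ b)
    (hp : p ≤ a / 2) (hq : q ≤ b / 2) :
    ∃ p' q', p' ≤ (a + 1) / 2 ∧ q' ≤ (b - 1) / 2 ∧ p' + q' ≤ p + q ∧
      p * (a - p) + q * (b - q) ≤ p' * (a + 1 - p') + q' * (b - 1 - q') := by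
  rcases Nat.eq_zero_or_pos q with hq0 | hq0
  · refine ⟨p, 0, by omega, by omega, by omega, ?_⟩
    subst hq0
    simp only [Nat.zero_mul, Nat.mul_zero, Nat.add_zero]
    exact Nat.mul_le_mul_left p (by omega)
  rcases lt_or_ge p q with hpq | hpq
  · refine ⟨p + 1, q - 1, by omega, by omega, by omega, ?_⟩
    zify [show p ≤ a by omega, show q ≤ b by omega, show p + 1 ≤ a + 1 by omega,
      show q - 1 ≤ b - 1 by omega, show (1:ℕ) ≤ q from hq0, show (1:ℕ) ≤ b from hb1]
    have h1 : (b:ℤ) - q ≤ (a:ℤ) - p := by omega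
    nlinarith [h1]
  rcases le_or_gt q ((b-1)/2) with hqb | hqb
  · refine ⟨p, q, by omega, hqb, le_refl _, ?_⟩
    zify [show p ≤ a by omega, show q ≤ b by omega, show p ≤ a + 1 by omega,
      show q ≤ b - 1 by omega, show (1:ℕ) ≤ b from hb1]
    nlinarith [hpq]
  · refine ⟨p, q - 1, by omega, by omega, by omega, ?_⟩
    have hbq : b - q ≤ p := by omega
    zify [show p ≤ a by omega, show q ≤ b by omega, show p ≤ a + 1 by omega,
      show q - 1 ≤ b - 1 by omega, show (1:ℕ) ≤ q from hq0, show (1:ℕ) ≤ b from hb1, hbq]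
    have : (b:ℤ) - q ≤ p := by omega
    nlinarith [this]

/-- If `Q'` is obtained from the partition `Q` by replacing parts `a ≥ b ≥ 1` with
`a+1` and `b−1` (omitting `b−1` when `b = 1`), then `σ_i(Q') ≥ σ_i(Q)` for all `i`. -/
theorem sigma_mono_of_shift (Q : Multiset ℕ) (hpos : ∀ x ∈ Q, 0 < x) (a b : ℕ)
    (ha : a ∈ Q) (hb : b ∈ Q.erase a) (hba : b ≤ a) (hb1 : 1 ≤ b) (i : ℕ) :
    sigmaP Q i ≤
      sigmaP ((a + 1) ::ₘ
        (if b = 1 then (Q.erase a).erase b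
         else (b - 1) ::ₘ (Q.erase a).erase b)) i := by
  set R := Xi ((Q.erase a).erase b) with hR
  have hQ : Q = a ::ₘ b ::ₘ ((Q.erase a).erase b) := by
    rw [Multiset.cons_erase hb, Multiset.cons_erase ha]
  have hXiQ : Xi Q = xi a + (xi b + R) := by
    conv_lhs => rw [hQ]
    simp [Xi, Multiset.cons_bind, hR]
  have hXiQ' : Xi ((a + 1) ::ₘ
      (if b = 1 then (Q.erase a).erase b
       else (b - 1) ::ₘ (Q.erase a).erase b)) = xi (a+1) + (xi (b-1) + R) := by
    split_ifs with h
    · have : xi (b - 1) = 0 := by simp [h, xi]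
      simp [Xi, Multiset.cons_bind, hR, this]
    · simp [Xi, Multiset.cons_bind, hR]
  obtain ⟨T, hTle, hTcard, hTsum⟩ := exists_witness (Xi Q) i
  set Ta := T ∩ xi a with hTa'
  set T1 := T - xi a with hT1'
  have hT1 : T1 ≤ xi b + R := by
    rw [hT1', Multiset.sub_le_iff_le_add]
    rw [hXiQ] at hTle
    calc T ≤ xi a + (xi b + R) := hTle
      _ = (xi b + R) + xi a := add_comm _ _
  set Tb := T1 ∩ xi b with hTb'
  set Tr := T1 - xi b with hTr'
  have hTa : Ta ≤ xi a := Multiset.inter_le_right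
  have hTb : Tb ≤ xi b := Multiset.inter_le_right
  have hTr : Tr ≤ R := by
    rw [hTr', Multiset.sub_le_iff_le_add]
    calc T1 ≤ xi b + R := hT1
      _ = R + xi b := add_comm _ _
  have hdec1 : Tr + Tb = T1 := Multiset.sub_add_inter _ _
  have hdec2 : T1 + Ta = T := Multiset.sub_add_inter _ _
  set p := Multiset.card Ta with hp'
  set q := Multiset.card Tb with hq'
  have hpa : p ≤ a / 2 := by
    have := Multiset.card_le_card hTa
    rwa [xi_card] at this
  have hqb : q ≤ b / 2 := by
    have := Multiset.card_le_card hTb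
    rwa [xi_card] at this
  have hsa : Ta.sum ≤ p * (a - p) := by
    have := sum_le_sigA hTa (le_refl p)
    rwa [sigA_xi a p hpa] at this
  have hsb : Tb.sum ≤ q * (b - q) := by
    have := sum_le_sigA hTb (le_refl q)
    rwa [sigA_xi b q hqb] at this
  obtain ⟨p', q', hp1, hq1, hpq1, hgain⟩ := choose_shift hba hb1 hpa hqb
  obtain ⟨Wa, hWa, hWac, hWas⟩ := xi_witness (a+1) p' hp1
  obtain ⟨Wb, hWb, hWbc, hWbs⟩ := xi_witness (b-1) q' hq1
  have hS'le : Wa + (Wb + Tr) ≤ xi (a+1) + (xi (b-1) + R) :=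
    add_le_add hWa (add_le_add hWb hTr)
  have hcardT : Multiset.card T = Multiset.card Tr + q + p := by
    rw [← hdec2, ← hdec1]
    simp [hp', hq']
  have hcard : Multiset.card (Wa + (Wb + Tr)) ≤ i := by
    have : Multiset.card (Wa + (Wb + Tr)) = p' + (q' + Multiset.card Tr) := by
      simp [hWac, hWbc]
    omega
  have final := sum_le_sigA (hXiQ' ▸ hS'le) hcard
  have hsumT : T.sum = Tr.sum + Tb.sum + Ta.sum := by
    rw [← hdec2, ← hdec1]
    simp
  have hsumS' : (Wa + (Wb + Tr)).sum = p' * (a + 1 - p') + q' * (b - 1 - q') + Tr.sum := by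
    simp [Multiset.sum_add, hWas, hWbs]
    ring
  rw [sigmaP_eq, sigmaP_eq]
  calc sigA (Xi Q) i = T.sum := hTsum.symm
    _ = Tr.sum + Tb.sum + Ta.sum := hsumT
    _ ≤ Tr.sum + q * (b - q) + p * (a - p) := by omega
    _ ≤ Tr.sum + (p' * (a + 1 - p') + q' * (b - 1 - q')) := by omega
    _ = (Wa + (Wb + Tr)).sum := by rw [hsumS']; ring
    _ ≤ _ := final
end

section
/- Let d and N be integers with 1 ≤ d < N, and let Q_d be the partition of N consisting of ⌊N/d⌋ parts equal to d together with one part equal to N − d·⌊N/d⌋ when this is nonzero. Then for every partition Q of N all of whose parts are at most d, and for every natural number i, one has σ_i(Q) ≤ σ_i(Q_d). -/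
/-- The partition `Q_d` of `N`: `⌊N/d⌋` parts equal to `d`, together with one part
equal to `N − d·⌊N/d⌋` when this is nonzero. -/
def Qd (d N : ℕ) : Multiset ℕ :=
  Multiset.replicate (N / d) d + (if N % d = 0 then 0 else {N % d})

/-! ### Auxiliary lemmas -/

lemma sq_mod_four (m : ℕ) : m^2 % 4 = m % 2 := by
  rcases Nat.even_or_odd m with ⟨k, hk⟩ | ⟨k, hk⟩
  · have h1 : m^2 = 4 * k^2 := by subst hk; ring
    set A := m^2; set K := k^2
    omega
  · have h1 : m^2 = 4 * (k^2 + k) + 1 := by subst hk; ring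
    set A := m^2; set K := k^2 + k
    omega

lemma sq_div4_conv (s p q : ℕ) :
    (s+q)^2/4 + (s+p)^2/4 ≤ s^2/4 + (s+p+q)^2/4 := by
  have key : s^2 + (s+p+q)^2 = (s+q)^2 + (s+p)^2 + 2*(p*q) := by ring
  have hA := sq_mod_four (s+q)
  have hB := sq_mod_four (s+p)
  have hC := sq_mod_four s
  have hD := sq_mod_four (s+p+q)
  rcases Nat.eq_zero_or_pos p with hp | hp
  · subst hp; simp only [Nat.add_zero]; omega
  rcases Nat.eq_zero_or_pos q with hq | hq
  · subst hq; simp only [Nat.add_zero]; omega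
  have hpq : 1 ≤ p * q := Nat.one_le_iff_ne_zero.2 (by positivity)
  set A := (s+q)^2; set B := (s+p)^2; set C := s^2; set D := (s+p+q)^2
  set PQ := p*q
  omega

lemma sq_div4_mono {u w : ℕ} (h : u ≤ w) : u^2/4 ≤ w^2/4 :=
  Nat.div_le_div_right (Nat.pow_le_pow_left h 2)

lemma F_superadd (t a b : ℕ) :
    (a - t)^2/4 + (b - t)^2/4 ≤ ((a + b) - t)^2/4 := by
  set u := a - t; set v := b - t
  have huv : u + v ≤ (a+b) - t := by omega
  have hmono : (u+v)^2/4 ≤ ((a+b)-t)^2/4 := sq_div4_mono huv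
  have h1 : u^2 + v^2 ≤ (u+v)^2 := by nlinarith
  have h2 := sq_mod_four u
  have h3 := sq_mod_four v
  set X := u^2; set Y := v^2; set Z := (u+v)^2; set W := ((a+b)-t)^2
  omega

lemma F_conv (t a b d : ℕ) (ha : a ≤ d) (hb : b ≤ d) (hd : d ≤ a + b) :
    (a - t)^2/4 + (b - t)^2/4 ≤ (d - t)^2/4 + ((a + b - d) - t)^2/4 := by
  set u := a - t with hu
  set v := b - t with hv
  set w := d - t with hw
  set s := (a + b - d) - t with hs
  have h1 : u ≤ w := by omega
  have h2 : v ≤ w := by omega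
  have h3 : s ≤ u := by omega
  have h4 : s ≤ v := by omega
  have h5 : u + v ≤ s + w := by omega
  rcases le_or_gt s u with hsu | hsu
  · have hw' : u + v - s ≤ w := by omega
    have hq : u = s + (u - s) := by omega
    have hp : v = s + (v - s) := by omega
    calc u^2/4 + v^2/4 = (s + (u-s))^2/4 + (s + (v-s))^2/4 := by rw [← hq, ← hp]
      _ ≤ s^2/4 + (s + (v-s) + (u-s))^2/4 := sq_div4_conv s (v-s) (u-s)
      _ ≤ s^2/4 + w^2/4 := by
          have hle' : s + (v-s) + (u-s) ≤ w := by omega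
          have := sq_div4_mono hle'
          omega
      _ = w^2/4 + s^2/4 := by omega
  · omega

lemma mrange_succ' (n : ℕ) : Multiset.range (n+1) = 0 ::ₘ (Multiset.range n).map (·+1) := by
  rw [show Multiset.range (n+1) = ((List.range (n+1) : List ℕ) : Multiset ℕ) from rfl,
      List.range_succ_eq_map]
  rfl

lemma xi_add_two (n : ℕ) : xi (n+2) = (n+1) ::ₘ xi n := by
  unfold xi
  rw [show (n+2)/2 = n/2+1 from by omega, mrange_succ']
  simp only [Multiset.map_cons, Multiset.map_map, Function.comp]
  rw [show n + 2 - 1 - 2*0 = n + 1 from by omega]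
  congr 1
  exact Multiset.map_congr rfl (fun j hj => by omega)

lemma step_arith (n t : ℕ) : (n+1 - t) + (n - t)^2/4 = ((n+2) - t)^2/4 := by
  rcases le_or_gt t n with h | h
  · have e1 : n - t + 2 = n + 2 - t := by omega
    have e3 : n + 1 - t = (n - t) + 1 := by omega
    have e2 : ((n-t) + 2)^2 = (n-t)^2 + 4*((n-t)+1) := by ring
    rw [e3, ← e1]
    set m := n - t
    set X := m^2; set Y := (m+2)^2
    omega
  · have h1 : n - t = 0 := by omega
    have h2 : n + 1 - t = 0 := by omega
    rw [h1, h2]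
    rcases le_or_gt t (n+1) with h3 | h3
    · have : n + 2 - t = 1 := by omega
      rw [this]; norm_num
    · have : n + 2 - t = 0 := by omega
      rw [this]; norm_num

lemma xi_map_sum (t : ℕ) : ∀ n, ((xi n).map (· - t)).sum = (n - t)^2/4 := by
  intro n
  induction n using Nat.strong_induction_on with
  | _ n ih =>
    match n with
    | 0 => simp [xi]
    | 1 =>
      have h1 : (1:ℕ)/2 = 0 := by norm_num
      have h2 : (1 - t)^2/4 = 0 := by
        rcases t with _ | t
        · norm_num
        · simp
      simp [xi, h1, h2]
    | (n+2) =>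
      rw [xi_add_two, Multiset.map_cons, Multiset.sum_cons, ih n (by omega)]
      exact step_arith n t

lemma main_ineq (d t : ℕ) (hd : 0 < d) (Q : Multiset ℕ) (hle : ∀ a ∈ Q, a ≤ d) :
    (Q.map (fun n => (n - t)^2/4)).sum ≤ Q.sum / d * ((d-t)^2/4) + ((Q.sum % d - t)^2/4) := by
  induction Q using Multiset.induction_on with
  | empty => simp
  | cons a Q ih =>
    have ha : a ≤ d := hle a (Multiset.mem_cons_self a Q)
    have ihh := ih (fun x hx => hle x (Multiset.mem_cons_of_mem hx))
    rw [Multiset.map_cons, Multiset.sum_cons, Multiset.sum_cons]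
    have hds : d * (Q.sum / d) + Q.sum % d = Q.sum := Nat.div_add_mod Q.sum d
    have hrd : Q.sum % d < d := Nat.mod_lt _ hd
    rcases lt_or_ge (Q.sum % d + a) d with hcase | hcase
    · have he : a + Q.sum = d * (Q.sum / d) + (Q.sum % d + a) := by omega
      have h1 : (a + Q.sum) / d = Q.sum / d := by
        rw [he, Nat.mul_add_div hd, Nat.div_eq_of_lt hcase, Nat.add_zero]
      have h2 : (a + Q.sum) % d = Q.sum % d + a := by
        rw [he, Nat.mul_add_mod, Nat.mod_eq_of_lt hcase]
      rw [h1, h2]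
      have hsup := F_superadd t (Q.sum % d) a
      set FA := (a - t)^2/4
      set FR := (Q.sum % d - t)^2/4
      set FRA := (Q.sum % d + a - t)^2/4
      set K := Q.sum / d * ((d-t)^2/4)
      omega
    · have he : a + Q.sum = d * (Q.sum / d + 1) + (Q.sum % d + a - d) := by
        have : d * (Q.sum / d + 1) = d * (Q.sum / d) + d := by ring
        omega
      have hlt : Q.sum % d + a - d < d := by omega
      have h1 : (a + Q.sum) / d = Q.sum / d + 1 := by
        rw [he, Nat.mul_add_div hd, Nat.div_eq_of_lt hlt, Nat.add_zero]
      have h2 : (a + Q.sum) % d = Q.sum % d + a - d := by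
        rw [he, Nat.mul_add_mod, Nat.mod_eq_of_lt hlt]
      rw [h1, h2]
      have hconv := F_conv t a (Q.sum % d) d ha (by omega) (by omega)
      rw [show a + Q.sum % d - d = Q.sum % d + a - d from by omega] at hconv
      have hK : (Q.sum / d + 1) * ((d-t)^2/4) = Q.sum / d * ((d-t)^2/4) + (d-t)^2/4 := by ring
      rw [hK]
      set FA := (a - t)^2/4
      set FR := (Q.sum % d - t)^2/4
      set FRA := (Q.sum % d + a - t)^2/4
      set K := Q.sum / d * ((d-t)^2/4)
      set FD := (d-t)^2/4
      set FS := (Q.sum % d + a - d - t)^2/4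
      omega

lemma lemA (L : List ℕ) (i t : ℕ) : (L.take i).sum ≤ i * t + (L.map (· - t)).sum := by
  induction L generalizing i with
  | nil => simp
  | cons a L ih =>
    cases i with
    | zero => simp
    | succ n =>
      rw [List.take_succ_cons, List.sum_cons, List.map_cons, List.sum_cons]
      have := ih n
      have hmul : (n+1) * t = n * t + t := by ring
      set K := n * t
      omega

lemma lemB (L : List ℕ) (n : ℕ) (h : n < L.length) (hs : L.Pairwise (· ≥ ·)) :
    (n+1) * L.get ⟨n, h⟩ + (L.map (· - L.get ⟨n, h⟩)).sum ≤ (L.take (n+1)).sum := by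
  induction L generalizing n with
  | nil => simp at h
  | cons a L ih =>
    rw [List.pairwise_cons] at hs
    obtain ⟨hall, hsL⟩ := hs
    cases n with
    | zero =>
      simp only [List.get, List.take_succ_cons, List.take_zero, List.sum_cons, List.sum_nil,
        List.map_cons, List.sum_cons]
      have hz : (L.map (· - a)).sum = 0 := by
        apply List.sum_eq_zero
        intro x hx
        obtain ⟨y, hy, rfl⟩ := List.mem_map.1 hx
        have := hall y hy
        omega
      omega
    | succ n =>
      have hL : n < L.length := by simpa using h
      have hget : (a :: L).get ⟨n+1, h⟩ = L.get ⟨n, hL⟩ := rfl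
      rw [hget, List.take_succ_cons, List.sum_cons, List.map_cons, List.sum_cons]
      have hIH := ih n hL hsL
      have hat : L.get ⟨n, hL⟩ ≤ a := hall _ (L.get_mem _)
      have hmul : (n+1+1) * L.get ⟨n, hL⟩ = (n+1) * L.get ⟨n, hL⟩ + L.get ⟨n, hL⟩ := by ring
      set tt := L.get ⟨n, hL⟩
      set K := (n+1) * tt
      omega

lemma Xi_map_sum (Q : Multiset ℕ) (t : ℕ) :
    ((Xi Q).map (· - t)).sum = (Q.map (fun n => (n - t)^2/4)).sum := by
  induction Q using Multiset.induction_on with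
  | empty => simp [Xi]
  | cons a Q ih =>
    rw [show Xi (a ::ₘ Q) = xi a + Xi Q from Multiset.cons_bind a Q xi,
      Multiset.map_add, Multiset.sum_add, ih, Multiset.map_cons, Multiset.sum_cons,
      xi_map_sum t a]

lemma coe_sorted_rev (M : Multiset ℕ) :
    (((M.sort (· ≤ ·)).reverse : List ℕ) : Multiset ℕ) = M := by
  rw [Multiset.coe_reverse, Multiset.sort_eq]

lemma map_sum_rev (M : Multiset ℕ) (f : ℕ → ℕ) :
    (((M.sort (· ≤ ·)).reverse).map f).sum = (M.map f).sum := by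
  have : (M.map f) = ((((M.sort (· ≤ ·)).reverse).map f : List ℕ) : Multiset ℕ) := by
    rw [← Multiset.map_coe, coe_sorted_rev]
  rw [this, Multiset.sum_coe]

lemma upperB (M : Multiset ℕ) (i t : ℕ) :
    (((M.sort (· ≤ ·)).reverse).take i).sum ≤ i * t + (M.map (· - t)).sum := by
  rw [← map_sum_rev M (· - t)]
  exact lemA _ i t

lemma exists_t (M : Multiset ℕ) (i : ℕ) :
    ∃ t, i * t + (M.map (· - t)).sum ≤ (((M.sort (· ≤ ·)).reverse).take i).sum := by
  set L := (M.sort (· ≤ ·)).reverse with hL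
  have hsorted : L.Pairwise (· ≥ ·) := by
    rw [hL, List.pairwise_reverse]
    exact Multiset.pairwise_sort M (· ≤ ·)
  have hlen : L.length = Multiset.card M := by
    rw [hL, List.length_reverse, Multiset.length_sort]
  rcases Nat.eq_zero_or_pos i with hi | hi
  · refine ⟨M.sum, ?_⟩
    subst hi
    simp only [Nat.zero_mul, Nat.zero_add]
    have : (M.map (· - M.sum)).sum = 0 := by
      apply Multiset.sum_eq_zero
      intro x hx
      obtain ⟨y, hy, rfl⟩ := Multiset.mem_map.1 hx
      have := Multiset.single_le_sum (fun z _ => Nat.zero_le z) y hy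
      omega
    omega
  rcases le_or_gt i L.length with hil | hil
  · obtain ⟨n, rfl⟩ : ∃ n, i = n + 1 := ⟨i - 1, by omega⟩
    have hn : n < L.length := by omega
    refine ⟨L.get ⟨n, hn⟩, ?_⟩
    rw [← map_sum_rev M (· - L.get ⟨n, hn⟩)]
    exact lemB L n hn hsorted
  · refine ⟨0, ?_⟩
    rw [List.take_of_length_le (by omega)]
    simp only [Nat.mul_zero, Nat.zero_add]
    have h1 : (M.map (· - 0)).sum = M.sum := by
      rw [show (M.map (· - 0)) = M.map id from Multiset.map_congr rfl (fun x _ => Nat.sub_zero x),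
        Multiset.map_id]
    rw [h1, ← Multiset.sum_coe, coe_sorted_rev]

lemma Qd_map_sum (d N t : ℕ) :
    ((Qd d N).map (fun n => (n - t)^2/4)).sum
      = N / d * ((d - t)^2/4) + ((N % d - t)^2/4) := by
  unfold Qd
  rw [Multiset.map_add, Multiset.sum_add, Multiset.map_replicate, Multiset.sum_replicate,
    smul_eq_mul]
  rcases eq_or_ne (N % d) 0 with h | h
  · rw [h]; simp
  · rw [if_neg h]; simp

/-- For `1 ≤ d < N` and any partition `Q` of `N` all of whose parts are at most
`d`, one has `σ_i(Q) ≤ σ_i(Q_d)` for every `i`. -/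
theorem sigma_le_sigma_Qd (d N : ℕ) (hd : 1 ≤ d) (hdN : d < N)
    (Q : Multiset ℕ) (hpos : ∀ a ∈ Q, 0 < a) (hsum : Q.sum = N)
    (hle : ∀ a ∈ Q, a ≤ d) (i : ℕ) :
    sigmaP Q i ≤ sigmaP (Qd d N) i := by
  obtain ⟨t, ht⟩ := exists_t (Xi (Qd d N)) i
  have h1 : sigmaP Q i ≤ i * t + ((Xi Q).map (· - t)).sum := upperB (Xi Q) i t
  have h2 : ((Xi Q).map (· - t)).sum ≤ ((Xi (Qd d N)).map (· - t)).sum := by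
    rw [Xi_map_sum, Xi_map_sum, Qd_map_sum]
    have := main_ineq d t hd Q hle
    rw [hsum] at this
    exact this
  exact le_trans h1 (le_trans (by omega) ht)
end

section
/- Let d and N be integers with d ≥ 2 and N ≥ 2d. Define the partition Q'_d of N as follows: if N ≢ −1 (mod d), then Q'_d has ⌊N/d⌋ − 1 parts equal to d, one part equal to d−1, and one part equal to N − d·⌊N/d⌋ + 1; if N ≡ −1 (mod d), then Q'_d has ⌊N/d⌋ − 1 parts equal to d, two parts equal to d−1, and one part equal to 1. Then for every partition Q of N all of whose parts are at most d and at most ⌊N/d⌋ − 1 of whose parts are equal to d, one has σ_i(Q) ≤ σ_i(Q'_d) for every natural number i. -/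
/-- The partition `Q'_d` of `N`: if `N ≢ −1 (mod d)` it has `⌊N/d⌋ − 1` parts
equal to `d`, one part `d−1` and one part `N − d·⌊N/d⌋ + 1`; if `N ≡ −1 (mod d)`
it has `⌊N/d⌋ − 1` parts equal to `d`, two parts `d−1` and one part `1`. -/
def Qd' (d N : ℕ) : Multiset ℕ :=
  if N % d = d - 1 then Multiset.replicate (N / d - 1) d + {d - 1, d - 1, 1}
  else Multiset.replicate (N / d - 1) d + {d - 1, N % d + 1}

namespace SigmaAux

/-- `S_t(M) = Σ_{a ∈ M} (a ∸ t)`. -/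
def SS (t : ℕ) (M : Multiset ℕ) : ℕ := (M.map (fun a => a - t)).sum

/-- closed form for `S_t(ξ(n))`. -/
def gaux (t n : ℕ) : ℕ := ((n - t) / 2) * ((n - t + 1) / 2)

lemma xi_add_two (n : ℕ) : xi (n + 2) = (n + 1) ::ₘ xi n := by
  unfold xi
  rw [show (n+2)/2 = n/2 + 1 from by omega]
  have h : Multiset.range (n/2 + 1) = (↑(List.range (n/2+1)) : Multiset ℕ) := rfl
  have h2 : Multiset.range (n/2) = (↑(List.range (n/2)) : Multiset ℕ) := rfl
  have hf : ((fun j => n + 2 - 1 - 2 * j) ∘ Nat.succ) = (fun j => n - 1 - 2 * j) := by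
    funext j; simp only [Function.comp_apply, Nat.succ_eq_add_one]; omega
  rw [h, h2, List.range_succ_eq_map, Multiset.map_coe, Multiset.map_coe, List.map_cons,
    List.map_map, hf, show n + 2 - 1 - 2 * 0 = n + 1 from by omega, ← Multiset.cons_coe]

lemma gaux_zero (t : ℕ) : gaux t 0 = 0 := by
  unfold gaux
  rw [show (0 - t) / 2 = 0 from by omega]
  ring

lemma gaux_one (t : ℕ) : gaux t 1 = 0 := by
  unfold gaux
  rw [show (1 - t) / 2 = 0 from by omega]
  ring

lemma gaux_rec (t n : ℕ) : gaux t (n + 2) = gaux t n + (n + 1 - t) := by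
  unfold gaux
  rcases le_or_gt t n with h | h
  · obtain ⟨k, rfl⟩ : ∃ k, n = t + k := ⟨n - t, by omega⟩
    rw [show t + k + 2 - t = k + 2 from by omega, show t + k - t = k from by omega,
      show t + k + 1 - t = k + 1 from by omega]
    rcases Nat.even_or_odd k with ⟨j, rfl⟩ | ⟨j, rfl⟩
    · rw [show (j + j + 2) / 2 = j + 1 from by omega,
        show (j + j + 2 + 1) / 2 = j + 1 from by omega,
        show (j + j) / 2 = j from by omega,
        show (j + j + 1) / 2 = j from by omega]
      ring
    · rw [show (2 * j + 1 + 2) / 2 = j + 1 from by omega,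
        show (2 * j + 1 + 2 + 1) / 2 = j + 2 from by omega,
        show (2 * j + 1) / 2 = j from by omega,
        show (2 * j + 1 + 1) / 2 = j + 1 from by omega]
      ring
  · rw [show (n + 2 - t) / 2 = 0 from by omega, show (n - t) / 2 = 0 from by omega,
      show n + 1 - t = 0 from by omega]
    ring

lemma gaux_conv (t n : ℕ) : 2 * gaux t (n + 1) ≤ gaux t n + gaux t (n + 2) := by
  rw [gaux_rec]
  rcases le_or_gt t n with h | h
  · obtain ⟨k, rfl⟩ : ∃ k, n = t + k := ⟨n - t, by omega⟩
    unfold gaux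
    rw [show t + k + 1 - t = k + 1 from by omega, show t + k - t = k from by omega]
    rcases Nat.even_or_odd k with ⟨j, rfl⟩ | ⟨j, rfl⟩
    · rw [show (j + j + 1) / 2 = j from by omega,
        show (j + j + 1 + 1) / 2 = j + 1 from by omega,
        show (j + j) / 2 = j from by omega]
      nlinarith []
    · rw [show (2 * j + 1 + 1) / 2 = j + 1 from by omega,
        show (2 * j + 1 + 1 + 1) / 2 = j + 1 from by omega,
        show (2 * j + 1) / 2 = j from by omega]
      nlinarith []
  · have h1 : gaux t (n + 1) = 0 := by
      unfold gaux
      rw [show (n + 1 - t) / 2 = 0 from by omega]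
      ring
    omega

lemma SS_cons (t a : ℕ) (M : Multiset ℕ) : SS t (a ::ₘ M) = (a - t) + SS t M := by
  simp [SS]

lemma SS_xi (t n : ℕ) : SS t (xi n) = gaux t n := by
  induction n using Nat.strong_induction_on with
  | _ n ih =>
    match n with
    | 0 => simp [SS, xi, gaux_zero]
    | 1 =>
      have h0 : xi 1 = 0 := by
        unfold xi
        rw [show (1:ℕ)/2 = 0 from by omega]
        rfl
      rw [h0, gaux_one]
      rfl
    | (k + 2) =>
      rw [xi_add_two, SS_cons, ih k (by omega), gaux_rec]
      omega

lemma SS_Xi (t : ℕ) (Q : Multiset ℕ) : SS t (Xi Q) = (Q.map (gaux t)).sum := by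
  unfold SS Xi
  rw [Multiset.map_bind, Multiset.sum_bind]
  congr 1
  apply Multiset.map_congr rfl
  intro n _
  exact SS_xi t n

section ConvexMaster

variable (g : ℕ → ℕ)

/-- the greedy value of distributing `M` into parts of size at most `K`. -/
def fgr (K M : ℕ) : ℕ := (M / K) * g K + g (M % K)

lemma fgr_eq (K M q a : ℕ) (hK : 1 ≤ K) (hM : M = a + q * K) (ha : a < K) :
    fgr g K M = q * g K + g a := by
  subst hM
  unfold fgr
  rw [Nat.add_mul_div_right _ _ (by omega : 0 < K), Nat.add_mul_mod_self_right,
    Nat.div_eq_of_lt ha, Nat.mod_eq_of_lt ha, Nat.zero_add]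

variable (hg0 : g 0 = 0) (hg1 : g 1 = 0)
  (hconv : ∀ n, 2 * g (n + 1) ≤ g n + g (n + 2))

include hconv in
lemma step_le : ∀ b a, a ≤ b → g (a + 1) + g b ≤ g a + g (b + 1) := by
  intro b
  induction b with
  | zero => intro a ha; interval_cases a; omega
  | succ b ih =>
    intro a ha
    rw [show b + 1 + 1 = b + 2 from rfl]
    rcases Nat.lt_or_ge a (b + 1) with h | h
    · have h1 := ih a (by omega)
      have h2 := hconv b
      omega
    · have : a = b + 1 := by omega
      subst this
      show g (b + 2) + g (b + 1) ≤ g (b + 1) + g (b + 2)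
      omega

include hg0 hg1 hconv in
lemma g_mono : ∀ n, g n ≤ g (n + 1) := by
  intro n
  have h := step_le g hconv n 0 (Nat.zero_le n)
  simp only [Nat.zero_add] at h
  omega

include hg0 hconv in
lemma g_super : ∀ b a, g a + g b ≤ g (a + b) := by
  intro b
  induction b with
  | zero => intro a; show g a + g 0 ≤ g a; omega
  | succ b ih =>
    intro a
    have h1 := ih a
    have h2 := step_le g hconv (a + b) b (by omega)
    show g a + g (b + 1) ≤ g (a + b + 1)
    omega

include hconv in
lemma g_spread : ∀ e a n, e ≤ a → a ≤ n + e → g n + g a ≤ g (n + e) + g (a - e) := by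
  intro e
  induction e with
  | zero => intro a n _ _; simp
  | succ e ih =>
    intro a n he ha
    show g n + g a ≤ g (n + e + 1) + g (a - (e + 1))
    rw [show a - (e + 1) = a - e - 1 from by omega]
    rcases Nat.lt_or_ge a (n + e + 1) with h | h
    · have h1 := ih a n (by omega) (by omega)
      have h2 := step_le g hconv (n + e) (a - e - 1) (by omega)
      rw [show a - e - 1 + 1 = a - e from by omega] at h2
      omega
    · have haa : a = n + e + 1 := by omega
      subst haa
      rw [show n + e + 1 - e - 1 = n from by omega]
      omega

variable (K : ℕ) (hK : 1 ≤ K)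

include hg0 hconv hK in
lemma fgr_add (M n : ℕ) (hn : n ≤ K) : g n + fgr g K M ≤ fgr g K (M + n) := by
  obtain ⟨q, a, ha, hM⟩ : ∃ q a, a < K ∧ M = a + q * K :=
    ⟨M / K, M % K, Nat.mod_lt _ (by omega), by rw [Nat.mod_add_div']⟩
  rw [fgr_eq g K M q a hK hM ha]
  rcases Nat.lt_or_ge (a + n) K with h | h
  · rw [fgr_eq g K (M + n) q (a + n) hK (by omega) h]
    have hsup := g_super g hg0 hconv a n
    rw [Nat.add_comm n a] at hsup
    omega
  · rw [fgr_eq g K (M + n) (q + 1) (a + n - K) hK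
      (by rw [Nat.add_mul]; omega) (by omega)]
    have hsp := g_spread g hconv (K - n) a n (by omega) (by omega)
    rw [show n + (K - n) = K from by omega, show a - (K - n) = a + n - K from by omega] at hsp
    have hexp : (q + 1) * g K = q * g K + g K := by ring
    omega

include hg0 hconv hK in
lemma fgr_le (R : Multiset ℕ) (hR : ∀ a ∈ R, a ≤ K) : (R.map g).sum ≤ fgr g K R.sum := by
  induction R using Multiset.induction_on with
  | empty => simp [fgr, hg0]
  | cons a R ih =>
    rw [Multiset.map_cons, Multiset.sum_cons, Multiset.sum_cons]
    have h1 := ih (fun x hx => hR x (Multiset.mem_cons_of_mem hx))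
    have h2 := fgr_add g hg0 hconv K hK R.sum a (hR a (Multiset.mem_cons_self a R))
    rw [Nat.add_comm R.sum a] at h2
    omega

include hg0 hg1 hconv hK in
lemma fgr_step_d (M : ℕ) : fgr g K (M + (K + 1)) ≤ g (K + 1) + fgr g K M := by
  obtain ⟨q, a, ha, hM⟩ : ∃ q a, a < K ∧ M = a + q * K :=
    ⟨M / K, M % K, Nat.mod_lt _ (by omega), by rw [Nat.mod_add_div']⟩
  rw [fgr_eq g K M q a hK hM ha]
  rcases Nat.lt_or_ge (a + 1) K with h | h
  · rw [fgr_eq g K (M + (K + 1)) (q + 1) (a + 1) hK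
      (by rw [Nat.add_mul]; omega) h]
    have hst := step_le g hconv K a (by omega)
    have hexp : (q + 1) * g K = q * g K + g K := by ring
    omega
  · have haK : a + 1 = K := by omega
    rw [fgr_eq g K (M + (K + 1)) (q + 2) 0 hK
      (by rw [Nat.add_mul]; omega) (by omega)]
    have hcv := hconv (K - 1)
    rw [show K - 1 + 1 = K from by omega, show K - 1 + 2 = K + 1 from by omega,
      show K - 1 = a from by omega] at hcv
    have hexp : (q + 2) * g K = q * g K + 2 * g K := by ring
    omega

include hg0 hg1 hconv hK in
lemma fgr_step_jd (M : ℕ) : ∀ j, fgr g K (M + j * (K + 1)) ≤ j * g (K + 1) + fgr g K M := by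
  intro j
  induction j with
  | zero => simp
  | succ j ih =>
    have h1 := fgr_step_d g hg0 hg1 hconv K hK (M + j * (K + 1))
    rw [show M + (j + 1) * (K + 1) = M + j * (K + 1) + (K + 1) from by ring]
    have h3 : (j + 1) * g (K + 1) = j * g (K + 1) + g (K + 1) := by ring
    omega

include hg0 hg1 hconv in
lemma Qd'_sum_eq (d N : ℕ) (hd : 2 ≤ d) (hN : 2 * d ≤ N) :
    ((Qd' d N).map g).sum = (N / d - 1) * g d + fgr g (d - 1) (d + N % d) := by
  set K := d - 1 with hKdef
  have hK : 1 ≤ K := by omega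
  have hNd : N % d < d := Nat.mod_lt _ (by omega)
  unfold Qd'
  by_cases hmod : N % d = d - 1
  · rw [if_pos hmod]
    simp only [Multiset.map_add, Multiset.sum_add, Multiset.map_replicate,
      Multiset.sum_replicate, smul_eq_mul]
    rw [show ({d - 1, d - 1, 1} : Multiset ℕ) = (d-1) ::ₘ (d-1) ::ₘ {1} from rfl]
    simp only [Multiset.map_cons, Multiset.sum_cons, Multiset.map_singleton,
      Multiset.sum_singleton]
    rw [hg1, ← hKdef]
    rcases Nat.lt_or_ge 1 K with h1K | h1K
    · rw [fgr_eq g K (d + N % d) 2 1 hK (by omega) (by omega), hg1]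
      ring
    · have hK1 : K = 1 := by omega
      rw [fgr_eq g K (d + N % d) 3 0 hK (by omega) (by omega), hg0, hK1, hg1]
  · rw [if_neg hmod]
    have hs : N % d + 1 ≤ K := by omega
    simp only [Multiset.map_add, Multiset.sum_add, Multiset.map_replicate,
      Multiset.sum_replicate, smul_eq_mul]
    rw [show ({d - 1, N % d + 1} : Multiset ℕ) = (d-1) ::ₘ {N % d + 1} from rfl]
    simp only [Multiset.map_cons, Multiset.sum_cons, Multiset.map_singleton,
      Multiset.sum_singleton]
    rw [← hKdef]
    rcases Nat.lt_or_ge (N % d + 1) K with h | h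
    · rw [fgr_eq g K (d + N % d) 1 (N % d + 1) hK (by omega) h]
      ring
    · have hEq : N % d + 1 = K := by omega
      rw [fgr_eq g K (d + N % d) 2 0 hK (by omega) (by omega), hg0, hEq]
      ring

include hg0 hg1 hconv in
lemma master (d N : ℕ) (hd : 2 ≤ d) (hN : 2 * d ≤ N)
    (Q : Multiset ℕ) (hsum : Q.sum = N) (hle : ∀ a ∈ Q, a ≤ d)
    (hcount : Q.count d ≤ N / d - 1) :
    (Q.map g).sum ≤ ((Qd' d N).map g).sum := by
  classical
  set K := d - 1 with hKdef
  have hK : 1 ≤ K := by omega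
  set m := N / d - 1 with hm
  have hNdge : 2 ≤ N / d := by
    calc 2 = 2 * d / d := by rw [Nat.mul_div_cancel _ (by omega : 0 < d)]
    _ ≤ N / d := Nat.div_le_div_right hN
  have hmN : N / d = m + 1 := by omega
  set c := Q.count d with hc
  set R := Q.filter (fun a => ¬ a = d) with hR
  have hsplit : Q.filter (fun a => a = d) + R = Q := Multiset.filter_add_not _ Q
  have hfeq : Q.filter (fun a => a = d) = Multiset.replicate c d := Multiset.filter_eq' Q d
  have hQeq : Multiset.replicate c d + R = Q := by rw [← hfeq]; exact hsplit
  have hRle : ∀ a ∈ R, a ≤ K := by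
    intro a haR
    have h1 : a ∈ Q := Multiset.mem_of_mem_filter haR
    have h2 : ¬ a = d := (Multiset.mem_filter.mp haR).2
    have := hle a h1
    omega
  have hsum2 : c * d + R.sum = N := by
    rw [← hsum, ← hQeq, Multiset.sum_add, Multiset.sum_replicate, smul_eq_mul]
  obtain ⟨j, hj⟩ : ∃ j, m = c + j := ⟨m - c, by omega⟩
  have hNdm : N = (m + 1) * d + N % d := by
    have h := Nat.div_add_mod N d
    rw [hmN] at h
    have h2 : (m + 1) * d = d * (m + 1) := by ring
    omega
  have hRsum : R.sum = d + N % d + j * d := by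
    have hexp : (c + j + 1) * d = c * d + (j * d + d) := by ring
    rw [hj] at hNdm
    rw [hexp] at hNdm
    omega
  have hQsum : (Q.map g).sum = c * g d + (R.map g).sum := by
    rw [← hQeq, Multiset.map_add, Multiset.sum_add, Multiset.map_replicate,
      Multiset.sum_replicate, smul_eq_mul]
  have h1 : (R.map g).sum ≤ fgr g K R.sum := fgr_le g hg0 hconv K hK R hRle
  rw [hRsum] at h1
  have h2 := fgr_step_jd g hg0 hg1 hconv K hK (d + N % d) j
  rw [show K + 1 = d from by omega] at h2
  rw [Qd'_sum_eq g hg0 hg1 hconv d N hd hN, hQsum, ← hm, ← hKdef]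
  have hmul : m * g d = c * g d + j * g d := by rw [hj]; ring
  omega

end ConvexMaster

/-! ### From partial-sum domination to sorted `take` domination -/

lemma take_le_S (A : List ℕ) : ∀ (i t : ℕ),
    (A.take i).sum ≤ i * t + (A.map (fun a => a - t)).sum := by
  induction A with
  | nil => intro i t; simp
  | cons a A ih =>
    intro i t
    match i with
    | 0 => simp
    | (i + 1) =>
      rw [List.take_succ_cons, List.sum_cons, List.map_cons, List.sum_cons]
      have h1 := ih i t
      have h2 : (i + 1) * t = i * t + t := by ring
      omega

lemma exists_cut (B : List ℕ) (hB : B.Pairwise (fun a b => b ≤ a)) :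
    ∀ i, i ≤ B.length →
      ∃ t, (1 ≤ i → t ∈ B) ∧ i * t + (B.map (fun a => a - t)).sum ≤ (B.take i).sum := by
  induction B with
  | nil =>
    intro i hi
    refine ⟨0, ?_, by simp⟩
    intro h1
    simp at hi
    omega
  | cons b B' ih =>
    intro i hi
    have hb : ∀ a ∈ B', a ≤ b := fun a ha => List.rel_of_pairwise_cons hB ha
    have hB' : B'.Pairwise (fun a b => b ≤ a) := List.Pairwise.of_cons hB
    match i with
    | 0 =>
      refine ⟨b + B'.sum, by omega, ?_⟩
      simp only [Nat.zero_mul, List.take_zero, List.sum_nil, Nat.zero_add]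
      rw [List.map_cons, List.sum_cons, show b - (b + B'.sum) = 0 from by omega]
      rw [Nat.zero_add]
      have hz : ∀ x ∈ B'.map (fun a => a - (b + B'.sum)), x = 0 := by
        intro x hx
        obtain ⟨a, ha, rfl⟩ := List.mem_map.mp hx
        have h1 : a ≤ B'.sum := List.single_le_sum (fun _ _ => Nat.zero_le _) a ha
        omega
      rw [List.sum_eq_zero hz]
    | 1 =>
      refine ⟨b, fun _ => List.mem_cons_self, ?_⟩
      rw [List.take_succ_cons, List.take_zero, List.sum_cons, List.sum_nil,
        List.map_cons, List.sum_cons]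
      have hz : ∀ x ∈ B'.map (fun a => a - b), x = 0 := by
        intro x hx
        obtain ⟨a, ha, rfl⟩ := List.mem_map.mp hx
        have := hb a ha
        omega
      rw [List.sum_eq_zero hz]
      omega
    | (i + 2) =>
      obtain ⟨t, htm, hle⟩ := ih hB' (i + 1) (by simpa using hi)
      have htB : t ∈ B' := htm (by omega)
      have htb : t ≤ b := hb t htB
      refine ⟨t, fun _ => List.mem_cons_of_mem b htB, ?_⟩
      rw [List.take_succ_cons, List.sum_cons, List.map_cons, List.sum_cons]
      have hexp : (i + 2) * t = (i + 1) * t + t := by ring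
      omega

lemma take_le (A B : List ℕ) (hB : B.Pairwise (fun a b => b ≤ a))
    (h : ∀ t, (A.map (fun a => a - t)).sum ≤ (B.map (fun a => a - t)).sum) (i : ℕ) :
    (A.take i).sum ≤ (B.take i).sum := by
  rcases le_or_gt i B.length with hiB | hiB
  · obtain ⟨t, _, hle⟩ := exists_cut B hB i hiB
    calc (A.take i).sum ≤ i * t + (A.map (fun a => a - t)).sum := take_le_S A i t
      _ ≤ i * t + (B.map (fun a => a - t)).sum := by have := h t; omega
      _ ≤ (B.take i).sum := hle
  · have hBt : B.take i = B := List.take_of_length_le (by omega)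
    have h0 := h 0
    simp only [Nat.sub_zero, List.map_id'] at h0
    have hA : (A.take i).sum ≤ A.sum := by
      have := List.sum_take_add_sum_drop A i
      omega
    rw [hBt]
    calc (A.take i).sum ≤ A.sum := hA
      _ ≤ B.sum := h0

lemma sum_map_sorted (M : Multiset ℕ) (t : ℕ) :
    (((M.sort (· ≤ ·)).reverse).map (fun a => a - t)).sum = SS t M := by
  rw [List.map_reverse, List.sum_reverse]
  unfold SS
  conv_rhs => rw [← Multiset.sort_eq M (· ≤ ·)]
  rw [Multiset.map_coe, Multiset.sum_coe]

lemma sorted_rev (M : Multiset ℕ) :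
    ((M.sort (· ≤ ·)).reverse).Pairwise (fun a b => b ≤ a) := by
  rw [List.pairwise_reverse]
  exact Multiset.pairwise_sort M _

end SigmaAux

/-- For `d ≥ 2`, `N ≥ 2d`, and any partition `Q` of `N` all of whose parts are at
most `d` and with at most `⌊N/d⌋ − 1` parts equal to `d`, one has
`σ_i(Q) ≤ σ_i(Q'_d)` for every `i`. -/
theorem sigma_le_sigma_Qd' (d N : ℕ) (hd : 2 ≤ d) (hN : 2 * d ≤ N)
    (Q : Multiset ℕ) (hpos : ∀ a ∈ Q, 0 < a) (hsum : Q.sum = N)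
    (hle : ∀ a ∈ Q, a ≤ d) (hcount : Q.count d ≤ N / d - 1) (i : ℕ) :
    sigmaP Q i ≤ sigmaP (Qd' d N) i := by
  unfold sigmaP
  apply SigmaAux.take_le _ _ (SigmaAux.sorted_rev _)
  intro t
  rw [SigmaAux.sum_map_sorted, SigmaAux.sum_map_sorted, SigmaAux.SS_Xi, SigmaAux.SS_Xi]
  exact SigmaAux.master (SigmaAux.gaux t) (SigmaAux.gaux_zero t) (SigmaAux.gaux_one t)
    (SigmaAux.gaux_conv t) d N hd hN Q hsum hle hcount
end

section
/- Let d and N be integers with 2 ≤ d < N, and let Q_d be the partition of N consisting of ⌊N/d⌋ parts equal to d together with one part equal to N − d·⌊N/d⌋ when this is nonzero. Then max over integers i with 1 ≤ i ≤ ⌊N/2⌋ of σ_i(Q_d)/(i(N−i)) equals (d−1)/(N − ⌊N/d⌋). -/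
/-! ### Auxiliary arithmetic functions -/

def Sfun (v : ℕ) : ℕ := ((v+1)/2) * ((v+2)/2)

def Fn (n θ : ℕ) : ℕ := ∑ j ∈ Finset.range (n/2), (n - 1 - 2*j - θ)

lemma Sfun_step (v : ℕ) : v + Sfun (v - 2) ≤ Sfun v := by
  rcases le_or_gt v 2 with h | h
  · interval_cases v <;> simp [Sfun]
  · unfold Sfun
    have e1 : v-2+1 = v-1 := by omega
    have e2 : v-2+2 = v := by omega
    rw [e1, e2]
    obtain ⟨k, hk | hk⟩ := Nat.even_or_odd' v
    · obtain ⟨k', rfl⟩ : ∃ k', k = k'+2 := ⟨k-2, by omega⟩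
      have a1 : (v-1)/2 = k'+1 := by omega
      have a2 : v/2 = k'+2 := by omega
      have a3 : (v+1)/2 = k'+2 := by omega
      have a4 : (v+2)/2 = k'+3 := by omega
      rw [a1,a2,a3,a4]
      nlinarith [hk]
    · obtain ⟨k', rfl⟩ : ∃ k', k = k'+1 := ⟨k-1, by omega⟩
      have a1 : (v-1)/2 = k'+1 := by omega
      have a2 : v/2 = k'+1 := by omega
      have a3 : (v+1)/2 = k'+2 := by omega
      have a4 : (v+2)/2 = k'+2 := by omega
      rw [a1,a2,a3,a4]
      nlinarith [hk]

lemma sum_sub_le (m : ℕ) : ∀ v : ℕ, (∑ j ∈ Finset.range m, (v - 2*j)) ≤ Sfun v := by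
  induction m with
  | zero => simp [Sfun]
  | succ m ih =>
    intro v
    rw [Finset.sum_range_succ']
    have he : (∑ j ∈ Finset.range m, (v - 2*(j+1))) = ∑ j ∈ Finset.range m, ((v-2) - 2*j) := by
      apply Finset.sum_congr rfl; intro j _; omega
    rw [he]
    have h1 := ih (v-2)
    have h2 := Sfun_step v
    omega

/-! ### List lemmas for top-`i` sums -/

lemma take_sum_le (θ : ℕ) : ∀ (L : List ℕ) (i : ℕ),
    (L.take i).sum ≤ i*θ + (L.map (fun x => x - θ)).sum := by
  intro L
  induction L with
  | nil => intro i; simp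
  | cons x t ih =>
    intro i
    cases i with
    | zero => simp
    | succ i =>
      simp only [List.take_succ_cons, List.sum_cons, List.map_cons]
      have h1 := ih i
      have h2 : x ≤ θ + (x - θ) := by omega
      have h3 : (i+1)*θ = i*θ + θ := by ring
      rw [h3]
      linarith

lemma take_sum_ge (c : ℕ) : ∀ (L : List ℕ), L.Pairwise (· ≥ ·) →
    ∀ k, k ≤ L.countP (fun x => decide (c ≤ x)) → k * c ≤ (L.take k).sum := by
  intro L
  induction L with
  | nil => intro _ k hk; simp at hk; simp [hk]
  | cons x t ih =>
    intro hs k hk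
    have hst := List.pairwise_cons.mp hs
    cases k with
    | zero => simp
    | succ k =>
      rw [List.countP_cons] at hk
      by_cases hx : c ≤ x
      · have hk' : k ≤ t.countP (fun x => decide (c ≤ x)) := by
          simp [hx] at hk; omega
        have := ih hst.2 k hk'
        simp only [List.take_succ_cons, List.sum_cons]
        have h3 : (k+1)*c = k*c + c := by ring
        rw [h3]; linarith
      · exfalso
        have hpos : 0 < t.countP (fun x => decide (c ≤ x)) := by
          simp [hx] at hk; omega
        obtain ⟨y, hy, hcy⟩ := List.countP_pos_iff.mp hpos
        simp at hcy
        exact hx (le_trans hcy (hst.1 y hy))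

/-! ### Bounds for `sigmaP` -/

lemma sigma_le_master (Q : Multiset ℕ) (i θ : ℕ) :
    sigmaP Q i ≤ i*θ + ((Xi Q).map (fun x => x - θ)).sum := by
  unfold sigmaP
  set L := ((Xi Q).sort (· ≤ ·)).reverse with hL
  have h1 := take_sum_le θ L i
  have h2 : (L.map (fun x => x - θ)).sum = ((Xi Q).map (fun x => x - θ)).sum := by
    have hperm : List.Perm (L.map (fun x => x - θ)) (((Xi Q).sort (· ≤ ·)).map (fun x => x - θ)) :=
      (List.reverse_perm _).map _
    rw [hperm.sum_eq]
    have h3 : (Multiset.map (fun x => x - θ) (↑((Xi Q).sort (· ≤ ·)) : Multiset ℕ)).sum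
        = (((Xi Q).sort (· ≤ ·)).map (fun x => x - θ)).sum := by
      simp only [Multiset.map_coe, Multiset.sum_coe]
    rw [Multiset.sort_eq] at h3
    rw [h3]
  rw [← h2]; exact h1

lemma sorted_desc (Q : Multiset ℕ) : (((Xi Q).sort (· ≤ ·)).reverse).Pairwise (· ≥ ·) := by
  rw [List.pairwise_reverse]
  exact (Multiset.pairwise_sort (Xi Q) (· ≤ ·)).imp (fun hab => hab)

lemma sigma_ge_count (Q : Multiset ℕ) (k c : ℕ)
    (h : Multiset.replicate k c ≤ Xi Q) : k * c ≤ sigmaP Q k := by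
  unfold sigmaP
  apply take_sum_ge c _ (sorted_desc Q)
  have e1 : (((Xi Q).sort (· ≤ ·)).reverse).countP (fun x => decide (c ≤ x))
      = Multiset.countP (fun x => c ≤ x) (Xi Q) := by
    rw [List.countP_reverse]
    rw [← Multiset.coe_countP]
    rw [Multiset.sort_eq]
  rw [e1]
  have e2 : ∀ m, Multiset.countP (fun x => c ≤ x) (Multiset.replicate m c) = m := by
    intro m
    induction m with
    | zero => simp
    | succ n ih =>
      simp [Multiset.replicate_succ, Multiset.countP_cons, ih]
  calc k = Multiset.countP (fun x => c ≤ x) (Multiset.replicate k c) := (e2 k).symm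
    _ ≤ Multiset.countP (fun x => c ≤ x) (Xi Q) := Multiset.countP_le_of_le _ h

/-! ### Computation of the truncated sum over `Xi (Qd d N)` -/

lemma xi_map_sum_s12 (n θ : ℕ) : ((xi n).map (fun x => x - θ)).sum = Fn n θ := by
  unfold xi Fn
  rw [Multiset.map_map]
  rfl

lemma Xi_map_sum_s12 (d N θ : ℕ) :
    ((Xi (Qd d N)).map (fun x => x - θ)).sum = (N/d) * Fn d θ + Fn (N%d) θ := by
  unfold Xi Qd
  rw [Multiset.add_bind, Multiset.map_add, Multiset.sum_add]
  congr 1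
  · rw [Multiset.map_bind, Multiset.sum_bind, Multiset.map_replicate]
    rw [xi_map_sum_s12, Multiset.sum_replicate, smul_eq_mul]
  · by_cases h : N % d = 0
    · rw [h]
      simp [Fn]
    · rw [if_neg h, Multiset.singleton_bind, xi_map_sum_s12]

lemma Fn_le (n θ : ℕ) : Fn n θ ≤ Sfun (n - 1 - θ) := by
  unfold Fn
  have he : (∑ j ∈ Finset.range (n/2), (n - 1 - 2*j - θ))
      = ∑ j ∈ Finset.range (n/2), ((n - 1 - θ) - 2*j) := by
    apply Finset.sum_congr rfl; intro j _; omega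
  rw [he]
  exact sum_sub_le _ _

lemma repl_le_Xi (d N : ℕ) (hd : 2 ≤ d) :
    Multiset.replicate (N/d) (d-1) ≤ Xi (Qd d N) := by
  rw [← Multiset.le_count_iff_replicate_le]
  unfold Xi Qd
  rw [Multiset.add_bind, Multiset.count_add]
  have h1 : N/d * 1 ≤ Multiset.count (d-1) ((Multiset.replicate (N/d) d).bind xi) := by
    rw [Multiset.count_bind, Multiset.map_replicate, Multiset.sum_replicate, smul_eq_mul]
    apply Nat.mul_le_mul_left
    rw [Multiset.one_le_count_iff_mem]
    unfold xi
    rw [Multiset.mem_map]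
    refine ⟨0, ?_, by omega⟩
    rw [Multiset.mem_range]
    omega
  omega

/-! ### Integer algebra: concavity and endpoint nonnegativity -/

lemma concaveZ (e b c x y i : ℤ) (he : 0 ≤ e) (hx : x ≤ i) (hy : i ≤ y)
    (hPx : 0 ≤ -e*x^2 + b*x + c) (hPy : 0 ≤ -e*y^2 + b*y + c) :
    0 ≤ -e*i^2 + b*i + c := by
  rcases eq_or_lt_of_le (le_trans hx hy) with heq | hlt
  · have hix : i = x := le_antisymm (heq ▸ hy) hx
    rw [hix]; exact hPx
  · have key : (y - x) * (-e*i^2 + b*i + c)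
        = (y-i)*(-e*x^2 + b*x + c) + (i-x)*(-e*y^2 + b*y + c) + e*(i-x)*(y-i)*(y-x) := by
      ring
    have h1 : 0 ≤ (y-i)*(-e*x^2 + b*x + c) := mul_nonneg (by linarith) hPx
    have h2 : 0 ≤ (i-x)*(-e*y^2 + b*y + c) := mul_nonneg (by linarith) hPy
    have h3 : 0 ≤ e*(i-x)*(y-i)*(y-x) := by
      apply mul_nonneg; apply mul_nonneg; apply mul_nonneg
      all_goals linarith
    have h4 : 0 ≤ (y - x) * (-e*i^2 + b*i + c) := by rw [key]; linarith
    exact nonneg_of_mul_nonneg_right h4 (by linarith)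

lemma endA0 (q e r s : ℤ) (hq : 0 ≤ q) (hr : 0 ≤ r) (hs : 0 ≤ s) :
    0 ≤ e*(q*s)*((q*(e+1)+r) - q*s)
      - (q*e+r)*((q*s)*(e-2*s) + q*s*(s+1) + 0) := by
  have hid : e*(q*s)*((q*(e+1)+r) - q*s)
      - (q*e+r)*((q*s)*(e-2*s) + q*s*(s+1) + 0) = q*r*(s*(s-1)) := by ring
  rw [hid]
  apply mul_nonneg (mul_nonneg hq hr)
  rcases le_or_gt s 0 with h | h
  · have : s = 0 := le_antisymm h hs
    simp [this]
  · nlinarith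

lemma endB0 (q e r s : ℤ) (hq : 0 ≤ q) (hr : 0 ≤ r) (hs : 0 ≤ s) :
    0 ≤ e*(q*(s+1))*((q*(e+1)+r) - q*(s+1))
      - (q*e+r)*((q*(s+1))*(e-2*s) + q*s*(s+1) + 0) := by
  have hid : e*(q*(s+1))*((q*(e+1)+r) - q*(s+1))
      - (q*e+r)*((q*(s+1))*(e-2*s) + q*s*(s+1) + 0) = q*r*(s*(s+1)) := by ring
  rw [hid]
  apply mul_nonneg (mul_nonneg hq hr)
  nlinarith

lemma endA1 (q s m a b : ℤ) (hq : 0 ≤ q) (hm : 0 ≤ m) (ha : 1 ≤ a)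
    (hab : a ≤ b) (hba : b ≤ a+1) (hsb : b ≤ s) :
    0 ≤ (2*s+m)*(q*s+a)*((q*(2*s+m+1)+(a+b+m)) - (q*s+a))
      - (q*(2*s+m)+(a+b+m))*((q*s+a)*((2*s+m)-2*s) + q*s*(s+1) + a*b) := by
  have hid : (2*s+m)*(q*s+a)*((q*(2*s+m+1)+(a+b+m)) - (q*s+a))
      - (q*(2*s+m)+(a+b+m))*((q*s+a)*((2*s+m)-2*s) + q*s*(s+1) + a*b)
      = q*((a+b+m)*(s*(s-1)) - (2*s+m)*(a*(b-1))) + a*((b+m)*(2*s-(a+b))) := by ring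
  rw [hid]
  have hb1 : 1 ≤ b := le_trans ha hab
  have ht2 : 0 ≤ a*((b+m)*(2*s-(a+b))) := by
    apply mul_nonneg (by linarith)
    apply mul_nonneg (by linarith)
    linarith
  have ht1 : 0 ≤ (a+b+m)*(s*(s-1)) - (2*s+m)*(a*(b-1)) := by
    have k1 : 2*a*(b-1) ≤ (a+b)*(s-1) := by
      nlinarith [mul_nonneg (sub_nonneg.2 hab) (by linarith : (0:ℤ) ≤ b - 1)]
    have k2 : 0 ≤ (a+b)*(s-1)*s - 2*s*(a*(b-1)) := by nlinarith
    have k3 : m*(a*(b-1)) ≤ m*(s*(s-1)) := by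
      apply mul_le_mul_of_nonneg_left _ hm
      have : a*(b-1) ≤ s*(b-1) := by nlinarith
      nlinarith
    nlinarith
  have := mul_nonneg hq ht1
  linarith

lemma endB1 (q s m a b : ℤ) (hq : 0 ≤ q) (hm : 0 ≤ m) (ha : 0 ≤ a) (hb : 1 ≤ b)
    (hab : a ≤ b) (hsb : b ≤ s) :
    0 ≤ (2*s+m)*(q*(s+1)+b)*((q*(2*s+m+1)+(a+b+m)) - (q*(s+1)+b))
      - (q*(2*s+m)+(a+b+m))*((q*(s+1)+b)*((2*s+m)-2*s) + q*s*(s+1) + a*b) := by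
  have hid : (2*s+m)*(q*(s+1)+b)*((q*(2*s+m+1)+(a+b+m)) - (q*(s+1)+b))
      - (q*(2*s+m)+(a+b+m))*((q*(s+1)+b)*((2*s+m)-2*s) + q*s*(s+1) + a*b)
      = q*((a+b+m)*(s*(s+1)) - (2*s+m)*(b*(1+a))) + b*((a+m)*(2*s-(a+b))) := by ring
  rw [hid]
  have ht2 : 0 ≤ b*((a+m)*(2*s-(a+b))) := by
    apply mul_nonneg (by linarith)
    apply mul_nonneg (by linarith)
    linarith
  have ht1 : 0 ≤ (a+b+m)*(s*(s+1)) - (2*s+m)*(b*(1+a)) := by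
    have k1 : 2*b*(1+a) ≤ (a+b)*(s+1) := by
      nlinarith [mul_nonneg (sub_nonneg.2 hab) (by linarith : (0:ℤ) ≤ b - 1)]
    have k2 : 0 ≤ (a+b)*(s+1)*s - 2*s*(b*(1+a)) := by nlinarith
    have k3 : m*(b*(1+a)) ≤ m*(s*(s+1)) := by
      apply mul_le_mul_of_nonneg_left _ hm
      nlinarith
    nlinarith
  have := mul_nonneg hq ht1
  linarith

lemma keyZ (q e r s a b g i : ℤ) (hq : 1 ≤ q) (he : 1 ≤ e) (hr0 : 0 ≤ r) (hre : r ≤ e)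
    (hs0 : 0 ≤ s) (hs : 2*s ≤ e)
    (hA : (r+2*s ≤ e+1 ∧ a = 0 ∧ b = 1) ∨ (e+2 ≤ r+2*s ∧ a+b = r+2*s-e ∧ 1 ≤ a ∧ a ≤ b ∧ b ≤ a+1))
    (hG : (r+2*s ≤ e ∧ g = 0) ∨ (e+1 ≤ r+2*s ∧ g = b))
    (hx : q*s+a ≤ i) (hy : i ≤ q*(s+1)+g) :
    0 ≤ e*i*((q*(e+1)+r)-i) - (q*e+r)*(i*(e-2*s) + q*(s*(s+1)) + a*b) := by
  have hmain : 0 ≤ -e*i^2 + (e*(q*(e+1)+r) - (q*e+r)*(e-2*s))*i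
      + (-((q*e+r)*(q*(s*(s+1))+a*b))) := by
    apply concaveZ e _ _ (q*s+a) (q*(s+1)+g) i (by linarith) hx hy
    · rcases hA with ⟨hc, ha, hb⟩ | ⟨hc, hab, ha1, hab2, hba⟩
      · have h := endA0 q e r s (by linarith) hr0 hs0
        have heq : -e*(q*s+a)^2 + (e*(q*(e+1)+r) - (q*e+r)*(e-2*s))*(q*s+a)
            + (-((q*e+r)*(q*(s*(s+1))+a*b)))
            = e*(q*s)*((q*(e+1)+r) - q*s)
              - (q*e+r)*((q*s)*(e-2*s) + q*s*(s+1) + 0) := by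
          rw [ha]; ring
        rw [heq]; exact h
      · have hsb : b ≤ s := by omega
        have h := endA1 q s (e-2*s) a b (by linarith) (by linarith) ha1 hab2 hba hsb
        have heq : -e*(q*s+a)^2 + (e*(q*(e+1)+r) - (q*e+r)*(e-2*s))*(q*s+a)
            + (-((q*e+r)*(q*(s*(s+1))+a*b)))
            = (2*s+(e-2*s))*(q*s+a)*((q*(2*s+(e-2*s)+1)+(a+b+(e-2*s))) - (q*s+a))
              - (q*(2*s+(e-2*s))+(a+b+(e-2*s)))*((q*s+a)*((2*s+(e-2*s))-2*s)
                + q*s*(s+1) + a*b) := by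
          rw [show r = a+b+(e-2*s) by omega]; ring
        rw [heq]; exact h
    · rcases hG with ⟨hc, hg⟩ | ⟨hc, hg⟩
      · have ha : a = 0 ∧ b = 1 := by
          rcases hA with ⟨_, ha, hb⟩ | ⟨hc2, _, _, _, _⟩
          · exact ⟨ha, hb⟩
          · omega
        have h := endB0 q e r s (by linarith) hr0 hs0
        have heq : -e*(q*(s+1)+g)^2 + (e*(q*(e+1)+r) - (q*e+r)*(e-2*s))*(q*(s+1)+g)
            + (-((q*e+r)*(q*(s*(s+1))+a*b)))
            = e*(q*(s+1))*((q*(e+1)+r) - q*(s+1))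
              - (q*e+r)*((q*(s+1))*(e-2*s) + q*s*(s+1) + 0) := by
          rw [hg, ha.1]; ring
        rw [heq]; exact h
      · have hab : a+b = r+2*s-e ∧ 0 ≤ a ∧ a ≤ b ∧ b ≤ a+1 ∧ 1 ≤ b := by
          rcases hA with ⟨hc2, ha, hb⟩ | ⟨hc2, h1, h2, h3, h4⟩
          · constructor
            · omega
            · omega
          · exact ⟨h1, by omega, h3, h4, by omega⟩
        have hsb : b ≤ s := by omega
        have h := endB1 q s (e-2*s) a b (by linarith) (by linarith) hab.2.1
          hab.2.2.2.2 hab.2.2.1 hsb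
        have heq : -e*(q*(s+1)+g)^2 + (e*(q*(e+1)+r) - (q*e+r)*(e-2*s))*(q*(s+1)+g)
            + (-((q*e+r)*(q*(s*(s+1))+a*b)))
            = (2*s+(e-2*s))*(q*(s+1)+b)*((q*(2*s+(e-2*s)+1)+(a+b+(e-2*s))) - (q*(s+1)+b))
              - (q*(2*s+(e-2*s))+(a+b+(e-2*s)))*((q*(s+1)+b)*((2*s+(e-2*s))-2*s)
                + q*s*(s+1) + a*b) := by
          rw [hg, show r = a+b+(e-2*s) by omega]; ring
        rw [heq]; exact h
  nlinarith [hmain]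

/-! ### The covering of `[1, N/2]` by parameter intervals -/

lemma cover_top (d q r i s : ℕ) (hr : r < d) (h2 : 2*i ≤ d*q + r)
    (hds : d ≤ 2*s+2) : i ≤ q*(s+1) + ((r + 2*s + 2) - d)/2 := by
  have hA : d*q ≤ (q*(s+1))*2 := by
    calc d*q = q*d := by ring
      _ ≤ q*(2*(s+1)) := Nat.mul_le_mul (le_refl q) (by omega)
      _ = (q*(s+1))*2 := by ring
  generalize hA1 : q*(s+1) = A at *
  generalize hB : d*q = B at *
  omega

lemma cover (d q r i : ℕ) (hd : 2 ≤ d) (hq : 1 ≤ q) (hr : r < d) (h2 : 2*i ≤ d*q + r) :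
    ∃ s, 2*s ≤ d-1 ∧ q*s + ((r + 2*s) - d + 1)/2 ≤ i
      ∧ i ≤ q*(s+1) + ((r + 2*s + 2) - d)/2 := by
  suffices aux : ∀ t s, (d-1) - 2*s ≤ t → 2*s ≤ d-1 → q*s + ((r + 2*s) - d + 1)/2 ≤ i →
      ∃ s', 2*s' ≤ d-1 ∧ q*s' + ((r + 2*s') - d + 1)/2 ≤ i
        ∧ i ≤ q*(s'+1) + ((r + 2*s' + 2) - d)/2 by
    apply aux (d-1) 0 (by omega) (by omega)
    have h0 : q*0 = 0 := by ring
    rw [h0]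
    omega
  intro t
  induction t with
  | zero =>
    intro s h0 hs hα
    exact ⟨s, hs, hα, cover_top d q r i s hr h2 (by omega)⟩
  | succ t ih =>
    intro s hts hs hα
    by_cases hle : i ≤ q*(s+1) + ((r + 2*s + 2) - d)/2
    · exact ⟨s, hs, hα, hle⟩
    · push_neg at hle
      by_cases hnext : 2*(s+1) ≤ d-1
      · apply ih (s+1) (by omega) hnext
        generalize hA : q*(s+1) = A at hle ⊢
        omega
      · exact absurd (cover_top d q r i s hr h2 (by omega)) (by omega)

/-! ### The key inequality -/

lemma key_s12 (d q r i : ℕ) (hd : 2 ≤ d) (hq : 1 ≤ q) (hr : r < d) (h1 : 1 ≤ i)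
    (h2 : 2*i ≤ d*q + r) :
    ∃ θ : ℕ, (q*(d-1)+r) * (i*θ + q * Sfun (d-1-θ) + Sfun (r-1-θ))
      ≤ (d-1)*i*((d*q+r)-i) := by
  obtain ⟨s, hs, hαl, hαr⟩ := cover d q r i hd hq hr h2
  refine ⟨d-1-2*s, ?_⟩
  set a := ((r + 2*s) - d + 1)/2 with ha
  set b := ((r + 2*s) - d + 2)/2 with hb
  set g := ((r + 2*s + 2) - d)/2 with hg
  have e1 : Sfun (d-1-(d-1-2*s)) = s*(s+1) := by
    have h : d-1-(d-1-2*s) = 2*s := by omega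
    rw [h]
    unfold Sfun
    have h1' : (2*s+1)/2 = s := by omega
    have h2' : (2*s+2)/2 = s+1 := by omega
    rw [h1', h2']
  have e2 : Sfun (r-1-(d-1-2*s)) = a*b := by
    have h : r-1-(d-1-2*s) = (r+2*s) - d := by omega
    rw [h]
    unfold Sfun
    rw [← ha, ← hb]
  rw [e1, e2]
  have hx : (q:ℤ)*s+a ≤ (i:ℤ) := by exact_mod_cast hαl
  have hy : (i:ℤ) ≤ (q:ℤ)*(s+1)+g := by exact_mod_cast hαr
  have hA : ((r:ℤ)+2*s ≤ ((d:ℤ)-1)+1 ∧ (a:ℤ) = 0 ∧ (b:ℤ) = 1)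
      ∨ (((d:ℤ)-1)+2 ≤ (r:ℤ)+2*s ∧ (a:ℤ)+b = (r:ℤ)+2*s-((d:ℤ)-1)
        ∧ 1 ≤ (a:ℤ) ∧ (a:ℤ) ≤ b ∧ (b:ℤ) ≤ a+1) := by
    rcases le_or_gt (r+2*s) d with hc | hc
    · left
      refine ⟨by push_cast; omega, ?_, ?_⟩
      · exact_mod_cast (show a = 0 by omega)
      · exact_mod_cast (show b = 1 by omega)
    · right
      have hab : a + b + d = r + 2*s + 1 := by omega
      have hab' : (a:ℤ) + b + d = (r:ℤ) + 2*s + 1 := by exact_mod_cast hab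
      refine ⟨by push_cast; omega, by linarith, ?_, ?_, ?_⟩
      · exact_mod_cast (show 1 ≤ a by omega)
      · exact_mod_cast (show a ≤ b by omega)
      · exact_mod_cast (show b ≤ a+1 by omega)
  have hG : ((r:ℤ)+2*s ≤ (d:ℤ)-1 ∧ (g:ℤ) = 0)
      ∨ (((d:ℤ)-1)+1 ≤ (r:ℤ)+2*s ∧ (g:ℤ) = b) := by
    rcases le_or_gt (r+2*s+1) d with hc | hc
    · left
      refine ⟨by push_cast; omega, ?_⟩
      exact_mod_cast (show g = 0 by omega)
    · right
      refine ⟨by push_cast; omega, ?_⟩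
      exact_mod_cast (show g = b by omega)
  have hZ := keyZ (q:ℤ) ((d:ℤ)-1) (r:ℤ) (s:ℤ) (a:ℤ) (b:ℤ) (g:ℤ) (i:ℤ)
    (by exact_mod_cast hq) (by push_cast; omega) (by positivity)
    (by push_cast; omega) (by positivity) (by push_cast; omega)
    hA hG hx hy
  zify [show 2*s ≤ d-1 from hs, show 1 ≤ d by omega, show i ≤ d*q+r by omega]
  push_cast
  nlinarith [hZ]

/-! ### Main theorem -/

/-- For `2 ≤ d < N`, the maximum over `1 ≤ i ≤ ⌊N/2⌋` of `σ_i(Q_d)/(i(N−i))`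
equals `(d−1)/(N − ⌊N/d⌋)`. -/
theorem max_sigma_ratio_Qd (d N : ℕ) (hd : 2 ≤ d) (hdN : d < N) :
    IsGreatest
      {x : ℚ | ∃ i : ℕ, 1 ≤ i ∧ i ≤ N / 2 ∧
        x = (sigmaP (Qd d N) i : ℚ) / ((i : ℚ) * ((N : ℚ) - (i : ℚ)))}
      (((d : ℚ) - 1) / ((N : ℚ) - ((N / d : ℕ) : ℚ))) := by
  set q := N / d with hqdef
  set r := N % d with hrdef
  have hN : d * q + r = N := Nat.div_add_mod N d
  have hrd : r < d := Nat.mod_lt _ (by omega)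
  have hq1 : 1 ≤ q := (Nat.one_le_div_iff (by omega)).mpr (le_of_lt hdN)
  have hqN2 : q ≤ N/2 := Nat.div_le_div_left hd (by omega)
  have hqltN : q < N := by omega
  -- value of sigma at q
  have hσq : sigmaP (Qd d N) q = q * (d-1) := by
    apply le_antisymm
    · have h1 := sigma_le_master (Qd d N) q (d-1)
      rw [Xi_map_sum_s12 d N (d-1)] at h1
      have h3 : Fn d (d-1) = 0 := by
        unfold Fn; apply Finset.sum_eq_zero; intro j _; omega
      have h4 : Fn r (d-1) = 0 := by
        unfold Fn; apply Finset.sum_eq_zero; intro j _; omega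
      rw [h3, h4] at h1
      simpa using h1
    · exact sigma_ge_count (Qd d N) q (d-1) (repl_le_Xi d N hd)
  have hNqQ : (0:ℚ) < (N:ℚ) - q := by
    have : (q:ℚ) < (N:ℚ) := by exact_mod_cast hqltN
    linarith
  constructor
  · refine ⟨q, hq1, hqN2, ?_⟩
    rw [hσq]
    have hq0 : (0:ℚ) < (q:ℚ) := by exact_mod_cast hq1
    rw [div_eq_div_iff (by linarith) (by positivity)]
    push_cast [Nat.cast_sub (show 1 ≤ d by omega)]
    ring
  · rintro x ⟨i, hi1, hiN2, rfl⟩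
    have h2iN : 2*i ≤ N := by omega
    obtain ⟨θ, hkey⟩ := key_s12 d q r i hd hq1 hrd hi1 (by rw [hN]; omega)
    have hm := sigma_le_master (Qd d N) i θ
    rw [Xi_map_sum_s12 d N θ] at hm
    have hF1 : q * Fn d θ ≤ q * Sfun (d-1-θ) := Nat.mul_le_mul (le_refl q) (Fn_le d θ)
    have hF2 : Fn r θ ≤ Sfun (r-1-θ) := Fn_le r θ
    have hσ : sigmaP (Qd d N) i ≤ i*θ + q * Sfun (d-1-θ) + Sfun (r-1-θ) := by
      rw [← hqdef, ← hrdef] at hm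
      omega
    have hfin : (q*(d-1)+r) * sigmaP (Qd d N) i ≤ (d-1)*i*(N-i) := by
      calc (q*(d-1)+r) * sigmaP (Qd d N) i
          ≤ (q*(d-1)+r) * (i*θ + q * Sfun (d-1-θ) + Sfun (r-1-θ)) :=
            Nat.mul_le_mul (le_refl _) hσ
        _ ≤ (d-1)*i*((d*q+r)-i) := hkey
        _ = (d-1)*i*(N-i) := by rw [hN]
    have hiQ : (0:ℚ) < (i:ℚ) := by exact_mod_cast hi1
    have hiN : i < N := by omega
    have hNiQ : (0:ℚ) < (N:ℚ) - i := by
      have : (i:ℚ) < (N:ℚ) := by exact_mod_cast hiN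
      linarith
    rw [div_le_div_iff₀ (by positivity) hNqQ]
    have hfinQ : ((q:ℚ)*((d:ℚ)-1)+(r:ℚ)) * (sigmaP (Qd d N) i : ℚ)
        ≤ ((d:ℚ)-1)*(i:ℚ)*((N:ℚ)-(i:ℚ)) := by
      have := (Nat.cast_le (α := ℚ)).mpr hfin
      push_cast [Nat.cast_sub (show 1 ≤ d by omega), Nat.cast_sub (show i ≤ N by omega)] at this
      convert this using 2 <;> ring
    have hNQ : (d:ℚ)*q + r = N := by exact_mod_cast hN
    have heq : (N:ℚ) - q = (q:ℚ)*((d:ℚ)-1)+(r:ℚ) := by linear_combination -hNQ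
    rw [heq]
    nlinarith [hfinQ]
end

section
/- For all integers d ≥ 2 and N ≥ 2d: 1 − (d−1)/(N − ⌊N/d⌋ + 1) > N(N−d)/(N² − 1). -/
/-- For integers `d ≥ 2` and `N ≥ 2d`:
`1 − (d−1)/(N − ⌊N/d⌋ + 1) > N(N−d)/(N² − 1)` (an inequality of rationals,
with `⌊N/d⌋` the integer floor). -/
theorem sarnak_xue_key_ineq_not_Qd (d N : ℕ) (hd : 2 ≤ d) (hN : 2 * d ≤ N) :
    (N : ℚ) * ((N : ℚ) - (d : ℚ)) / ((N : ℚ) ^ 2 - 1) <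
      1 - ((d : ℚ) - 1) / ((N : ℚ) - ((N / d : ℕ) : ℚ) + 1) := by
  set q : ℕ := N / d with hqdef
  have hqN : q ≤ N := Nat.div_le_self N d
  have hqd : q * d ≤ N := Nat.div_mul_le_self N d
  have hN4 : 4 ≤ N := le_trans (by omega) hN
  have hqNQ : (q : ℚ) ≤ N := by exact_mod_cast hqN
  have hqdQ : (q : ℚ) * d ≤ N := by exact_mod_cast hqd
  have hdQ : (2 : ℚ) ≤ d := by exact_mod_cast hd
  have hNQ : (4 : ℚ) ≤ N := by exact_mod_cast hN4
  have hNdQ : 2 * (d : ℚ) ≤ N := by exact_mod_cast hN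
  have h1 : (0 : ℚ) < (N : ℚ) ^ 2 - 1 := by nlinarith
  have h2 : (0 : ℚ) < (N : ℚ) - q + 1 := by linarith
  rw [one_sub_div h2.ne', div_lt_div_iff₀ h1 h2]
  nlinarith [mul_nonneg (sub_nonneg.2 hqNQ) (sub_nonneg.2 hdQ),
    mul_le_mul_of_nonneg_left hqdQ (by positivity : (0:ℚ) ≤ N)]
end

section
/- For all integers d ≥ 2 and N ≥ 2d such that N ≠ 2d, N ≠ 2d + 1, and (N,d) ≠ (6,2): 1 − (d−1)/(N − ⌊N/d⌋) > ( (1/2)(N² + ⌊N/d⌋²·d + N − d·⌊N/d⌋) − 1 ) / (N² − 1). -/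
/-- Leaf case `d ≥ 3`, `q ≥ 3`: positivity of the cleared-denominator
difference. -/
lemma sx_leafA (D Q R : ℚ) (hD : 3 ≤ D) (hQ : 3 ≤ Q) (hR : 0 ≤ R) :
    (1 / 2 * ((D * Q + R) ^ 2 + Q ^ 2 * D + (D * Q + R) - D * Q) - 1)
        * ((D * Q + R) - Q) <
      ((D * Q + R) - Q - (D - 1)) * ((D * Q + R) ^ 2 - 1) := by
  have ha : (0:ℚ) ≤ D - 3 := by linarith
  have hb : (0:ℚ) ≤ Q - 3 := by linarith
  have hc : (0:ℚ) ≤ R := hR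
  nlinarith [mul_nonneg (mul_nonneg (pow_nonneg ha 0) (pow_nonneg hb 0)) (pow_nonneg hc 1),
      mul_nonneg (mul_nonneg (pow_nonneg ha 0) (pow_nonneg hb 0)) (pow_nonneg hc 2),
      mul_nonneg (mul_nonneg (pow_nonneg ha 0) (pow_nonneg hb 0)) (pow_nonneg hc 3),
      mul_nonneg (mul_nonneg (pow_nonneg ha 0) (pow_nonneg hb 1)) (pow_nonneg hc 0),
      mul_nonneg (mul_nonneg (pow_nonneg ha 0) (pow_nonneg hb 1)) (pow_nonneg hc 1),
      mul_nonneg (mul_nonneg (pow_nonneg ha 0) (pow_nonneg hb 1)) (pow_nonneg hc 2),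
      mul_nonneg (mul_nonneg (pow_nonneg ha 0) (pow_nonneg hb 2)) (pow_nonneg hc 0),
      mul_nonneg (mul_nonneg (pow_nonneg ha 0) (pow_nonneg hb 2)) (pow_nonneg hc 1),
      mul_nonneg (mul_nonneg (pow_nonneg ha 0) (pow_nonneg hb 3)) (pow_nonneg hc 0),
      mul_nonneg (mul_nonneg (pow_nonneg ha 1) (pow_nonneg hb 0)) (pow_nonneg hc 0),
      mul_nonneg (mul_nonneg (pow_nonneg ha 1) (pow_nonneg hb 0)) (pow_nonneg hc 1),
      mul_nonneg (mul_nonneg (pow_nonneg ha 1) (pow_nonneg hb 0)) (pow_nonneg hc 2),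
      mul_nonneg (mul_nonneg (pow_nonneg ha 1) (pow_nonneg hb 1)) (pow_nonneg hc 0),
      mul_nonneg (mul_nonneg (pow_nonneg ha 1) (pow_nonneg hb 1)) (pow_nonneg hc 1),
      mul_nonneg (mul_nonneg (pow_nonneg ha 1) (pow_nonneg hb 1)) (pow_nonneg hc 2),
      mul_nonneg (mul_nonneg (pow_nonneg ha 1) (pow_nonneg hb 2)) (pow_nonneg hc 0),
      mul_nonneg (mul_nonneg (pow_nonneg ha 1) (pow_nonneg hb 2)) (pow_nonneg hc 1),
      mul_nonneg (mul_nonneg (pow_nonneg ha 1) (pow_nonneg hb 3)) (pow_nonneg hc 0),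
      mul_nonneg (mul_nonneg (pow_nonneg ha 2) (pow_nonneg hb 0)) (pow_nonneg hc 0),
      mul_nonneg (mul_nonneg (pow_nonneg ha 2) (pow_nonneg hb 0)) (pow_nonneg hc 1),
      mul_nonneg (mul_nonneg (pow_nonneg ha 2) (pow_nonneg hb 1)) (pow_nonneg hc 0),
      mul_nonneg (mul_nonneg (pow_nonneg ha 2) (pow_nonneg hb 1)) (pow_nonneg hc 1),
      mul_nonneg (mul_nonneg (pow_nonneg ha 2) (pow_nonneg hb 2)) (pow_nonneg hc 0),
      mul_nonneg (mul_nonneg (pow_nonneg ha 2) (pow_nonneg hb 2)) (pow_nonneg hc 1),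
      mul_nonneg (mul_nonneg (pow_nonneg ha 2) (pow_nonneg hb 3)) (pow_nonneg hc 0),
      mul_nonneg (mul_nonneg (pow_nonneg ha 3) (pow_nonneg hb 0)) (pow_nonneg hc 0),
      mul_nonneg (mul_nonneg (pow_nonneg ha 3) (pow_nonneg hb 1)) (pow_nonneg hc 0),
      mul_nonneg (mul_nonneg (pow_nonneg ha 3) (pow_nonneg hb 2)) (pow_nonneg hc 0),
      mul_nonneg (mul_nonneg (pow_nonneg ha 3) (pow_nonneg hb 3)) (pow_nonneg hc 0)]

/-- Leaf case `d ≥ 3`, `q = 2`, `r ≥ 2`. -/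
lemma sx_leafB (D R : ℚ) (hD : 3 ≤ D) (hR : 2 ≤ R) :
    (1 / 2 * ((D * 2 + R) ^ 2 + 2 ^ 2 * D + (D * 2 + R) - D * 2) - 1)
        * ((D * 2 + R) - 2) <
      ((D * 2 + R) - 2 - (D - 1)) * ((D * 2 + R) ^ 2 - 1) := by
  have ha : (0:ℚ) ≤ D - 3 := by linarith
  have hs : (0:ℚ) ≤ R - 2 := by linarith
  nlinarith [mul_nonneg ha hs, mul_nonneg (mul_nonneg ha hs) hs,
    mul_nonneg (mul_nonneg ha ha) hs, mul_nonneg hs hs,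
    mul_nonneg (mul_nonneg hs hs) hs]

/-- Leaf case `d = 2`, `r = 0`, `q ≥ 4`. -/
lemma sx_leafC (Q : ℚ) (hQ : 4 ≤ Q) :
    (1 / 2 * ((2 * Q + 0) ^ 2 + Q ^ 2 * 2 + (2 * Q + 0) - 2 * Q) - 1)
        * ((2 * Q + 0) - Q) <
      ((2 * Q + 0) - Q - (2 - 1)) * ((2 * Q + 0) ^ 2 - 1) := by
  have hc : (0:ℚ) ≤ Q - 4 := by linarith
  nlinarith [mul_nonneg hc hc, mul_nonneg (mul_nonneg hc hc) hc]

/-- Leaf case `d = 2`, `r = 1`, `q ≥ 3`. -/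
lemma sx_leafD (Q : ℚ) (hQ : 3 ≤ Q) :
    (1 / 2 * ((2 * Q + 1) ^ 2 + Q ^ 2 * 2 + (2 * Q + 1) - 2 * Q) - 1)
        * ((2 * Q + 1) - Q) <
      ((2 * Q + 1) - Q - (2 - 1)) * ((2 * Q + 1) ^ 2 - 1) := by
  have hc : (0:ℚ) ≤ Q - 3 := by linarith
  nlinarith [mul_nonneg hc hc, mul_nonneg (mul_nonneg hc hc) hc]

/-- For integers `d ≥ 2` and `N ≥ 2d` with `N ≠ 2d`, `N ≠ 2d + 1` and
`(N,d) ≠ (6,2)`: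
`1 − (d−1)/(N − ⌊N/d⌋) > ((1/2)(N² + ⌊N/d⌋²·d + N − d·⌊N/d⌋) − 1)/(N² − 1)`
(an inequality of rationals, with `⌊N/d⌋` the integer floor). -/
theorem sarnak_xue_key_ineq_Qd (d N : ℕ) (hd : 2 ≤ d) (hN : 2 * d ≤ N)
    (h1 : N ≠ 2 * d) (h2 : N ≠ 2 * d + 1) (h3 : ¬(N = 6 ∧ d = 2)) :
    ((1 / 2 : ℚ) * ((N : ℚ) ^ 2 + ((N / d : ℕ) : ℚ) ^ 2 * (d : ℚ) + (N : ℚ)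
        - (d : ℚ) * ((N / d : ℕ) : ℚ)) - 1) / ((N : ℚ) ^ 2 - 1) <
      1 - ((d : ℚ) - 1) / ((N : ℚ) - ((N / d : ℕ) : ℚ)) := by
  have hd0 : 0 < d := by omega
  have hN2 : 2 * d + 2 ≤ N := by omega
  have hmod : d * (N / d) + N % d = N := Nat.div_add_mod N d
  have hrd : N % d < d := Nat.mod_lt N hd0
  have hq2 : 2 ≤ N / d := (Nat.le_div_iff_mul_le hd0).mpr (by omega)
  have hqN : N / d < N := Nat.div_lt_self (by omega) hd
  have hx1 : (0:ℚ) < (N : ℚ) ^ 2 - 1 := by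
    have h6 : (6:ℚ) ≤ (N : ℚ) := by exact_mod_cast show (6:ℕ) ≤ N by omega
    nlinarith
  have hx2 : (0:ℚ) < (N : ℚ) - ((N / d : ℕ) : ℚ) := by
    have := (Nat.cast_lt (α := ℚ)).mpr hqN
    linarith
  rw [show (1:ℚ) - ((d:ℚ) - 1) / ((N:ℚ) - ((N / d : ℕ):ℚ))
      = (((N:ℚ) - ((N / d : ℕ):ℚ)) - ((d:ℚ) - 1)) / ((N:ℚ) - ((N / d : ℕ):ℚ)) from by
    field_simp]
  rw [div_lt_div_iff₀ hx1 hx2]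
  have hX : (N : ℚ) = (d : ℚ) * ((N / d : ℕ) : ℚ) + ((N % d : ℕ) : ℚ) := by
    exact_mod_cast hmod.symm
  rw [hX]
  rcases Nat.lt_or_ge d 3 with hd3 | hd3
  · -- d = 2
    have hd2 : d = 2 := by omega
    subst hd2
    have hN6 : N ≠ 6 := fun h => h3 ⟨h, rfl⟩
    rcases show N % 2 = 0 ∨ N % 2 = 1 by omega with hr | hr
    · have hq4 : 4 ≤ N / 2 := by omega
      have hq4' : (4:ℚ) ≤ ((N / 2 : ℕ) : ℚ) := by exact_mod_cast hq4
      rw [hr]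
      push_cast
      linarith [sx_leafC ((N / 2 : ℕ) : ℚ) hq4']
    · have hq3 : 3 ≤ N / 2 := by omega
      have hq3' : (3:ℚ) ≤ ((N / 2 : ℕ) : ℚ) := by exact_mod_cast hq3
      rw [hr]
      push_cast
      linarith [sx_leafD ((N / 2 : ℕ) : ℚ) hq3']
  · have hd3' : (3:ℚ) ≤ (d : ℚ) := by exact_mod_cast hd3
    rcases Nat.lt_or_ge (N / d) 3 with hq3 | hq3
    · -- q = 2, r ≥ 2
      have hq2' : N / d = 2 := by omega
      have hr2 : 2 ≤ N % d := by
        have h := hmod; rw [hq2'] at h; omega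
      have hr2' : (2:ℚ) ≤ ((N % d : ℕ) : ℚ) := by exact_mod_cast hr2
      rw [hq2']
      push_cast
      linarith [sx_leafB (d : ℚ) ((N % d : ℕ) : ℚ) hd3' hr2']
    · have hq3' : (3:ℚ) ≤ ((N / d : ℕ) : ℚ) := by exact_mod_cast hq3
      have hr0 : (0:ℚ) ≤ ((N % d : ℕ) : ℚ) := by positivity
      linarith [sx_leafA (d : ℚ) ((N / d : ℕ) : ℚ) ((N % d : ℕ) : ℚ) hd3' hq3' hr0]
end
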